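/- The dense local order S(2) has a local SWIR: there exists a ternary relation on the nonempty finite subsets of S(2) satisfying (Inv), (Ex), (Sta) and (Mon) with respect to automorphisms of S(2). -/

import Mathlib

namespace Stmt16

open scoped Classical

variable {M : Type*}

/-- The permutation `g` fixes the finite set `A` pointwise. -/
def Fixes (g : Equiv.Perm M) (A : Finset M) : Prop := ∀ a ∈ A, g a = a

/-- The image `g(A)` of a finite set under a permutation. -/
def pimg (g : Equiv.Perm M) (A : Finset M) : Finset M := A.map g.toEmbedding

/-- `B ≡_A B'` : some automorphism (with respect to the predicate `Auto`) fixes `A`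
pointwise and maps `B` onto `B'`. -/
def EquivOver (Auto : Equiv.Perm M → Prop) (A B B' : Finset M) : Prop :=
  ∃ g : Equiv.Perm M, Auto g ∧ Fixes g A ∧ pimg g B = B'

/-- A local SWIR: a ternary relation `Ind` on the nonempty finite subsets of `M`
(`Ind A B C` is read `B ⫫_A C`) satisfying (Inv), (Ex), (Sta) and (Mon) with respect to
the automorphisms of `M` (the permutations satisfying `Auto`). -/
structure IsLocalSWIR (Auto : Equiv.Perm M → Prop)
    (Ind : Finset M → Finset M → Finset M → Prop) : Prop where
  inv : ∀ A B C : Finset M, A.Nonempty → B.Nonempty → C.Nonempty →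
    ∀ g : Equiv.Perm M, Auto g → Ind A B C → Ind (pimg g A) (pimg g B) (pimg g C)
  exLeft : ∀ A B C : Finset M, A.Nonempty → B.Nonempty → C.Nonempty →
    ∃ B' : Finset M, EquivOver Auto A B B' ∧ Ind A B' C
  exRight : ∀ A B C : Finset M, A.Nonempty → B.Nonempty → C.Nonempty →
    ∃ C' : Finset M, EquivOver Auto A C C' ∧ Ind A B C'
  staLeft : ∀ A B B' C : Finset M, A.Nonempty → B.Nonempty → B'.Nonempty → C.Nonempty →
    Ind A B C → Ind A B' C →
    ∀ g : Equiv.Perm M, Auto g → Fixes g A → pimg g B = B' →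
      ∃ h : Equiv.Perm M, Auto h ∧ Fixes h (A ∪ C) ∧ ∀ b ∈ B, h b = g b
  staRight : ∀ A B C C' : Finset M, A.Nonempty → B.Nonempty → C.Nonempty → C'.Nonempty →
    Ind A B C → Ind A B C' →
    ∀ g : Equiv.Perm M, Auto g → Fixes g A → pimg g C = C' →
      ∃ h : Equiv.Perm M, Auto h ∧ Fixes h (A ∪ B) ∧ ∀ c ∈ C, h c = g c
  monLeft : ∀ A B C D : Finset M, A.Nonempty → B.Nonempty → C.Nonempty → D.Nonempty →
    Ind A (B ∪ D) C → Ind A B C ∧ Ind (A ∪ B) D C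
  monRight : ∀ A B C D : Finset M, A.Nonempty → B.Nonempty → C.Nonempty → D.Nonempty →
    Ind A B (C ∪ D) → Ind A B C ∧ Ind (A ∪ C) B D

/-- The vertex set of the dense local order `S(2)`: rational points of the circle,
identified with their arguments as fractions of a full turn. -/
def S2 : Type := {q : ℚ // 0 ≤ q ∧ q < 1}

/-- The tournament relation of `S(2)`: `x → y` iff the fractional part of `y - x` lies
strictly between `0` and `1/2`. -/
def s2rel (x y : S2) : Prop :=
  0 < Int.fract (y.1 - x.1) ∧ Int.fract (y.1 - x.1) < 1/2

/-- Automorphisms of `S(2)`. -/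
def AutoS2 (g : Equiv.Perm S2) : Prop :=
  ∀ a b : S2, s2rel (g a) (g b) ↔ s2rel a b

-- basics
def mk (q : ℚ) : S2 := ⟨Int.fract q, ⟨Int.fract_nonneg q, Int.fract_lt_one q⟩⟩

lemma S2ext {x y : S2} (h : x.1 = y.1) : x = y := Subtype.ext h

lemma fract_congr {a b : ℚ} (z : ℤ) (h : a - b = z) : Int.fract a = Int.fract b :=
  Int.fract_eq_fract.mpr ⟨z, h⟩

lemma fract_nn {q : ℚ} (h0 : 0 ≤ q) (h1 : q < 1) : Int.fract q = q :=
  Int.fract_eq_self.2 ⟨h0, h1⟩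

lemma fract_neg' {q : ℚ} (h0 : -1 ≤ q) (h1 : q < 0) : Int.fract q = q + 1 := by
  have h : Int.fract q = Int.fract (q + 1) := fract_congr (-1) (by push_cast; ring)
  rw [h, fract_nn (by linarith) (by linarith)]

def xi (o x : S2) : ℚ := Int.fract (x.1 - o.1)

lemma xi_nonneg (o x : S2) : 0 ≤ xi o x := Int.fract_nonneg _
lemma xi_lt_one (o x : S2) : xi o x < 1 := Int.fract_lt_one _

def sd (o x : S2) : Prop := xi o x < 1/2
def rp (o x : S2) : ℚ := if xi o x < 1/2 then xi o x else xi o x - 1/2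

lemma rp_nonneg (o x : S2) : 0 ≤ rp o x := by
  unfold rp; split_ifs with h
  · exact xi_nonneg o x
  · push_neg at h; linarith

lemma rp_lt_half (o x : S2) : rp o x < 1/2 := by
  unfold rp; split_ifs with h
  · exact h
  · have := xi_lt_one o x; linarith

lemma xi_eq_rp (o x : S2) : xi o x = if sd o x then rp o x else rp o x + 1/2 := by
  unfold sd rp; split_ifs with h
  · rfl
  · ring

lemma xi_inj {o x y : S2} (h : xi o x = xi o y) : x = y := by
  unfold xi at h
  obtain ⟨z, hz⟩ := Int.fract_eq_fract.1 h
  have hz' : x.1 - y.1 = (z:ℚ) := by linarith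
  have b1 := x.2.1; have b2 := x.2.2; have b3 := y.2.1; have b4 := y.2.2
  have h1 : (-1:ℚ) < z := by rw [← hz']; linarith
  have h2 : (z:ℚ) < 1 := by rw [← hz']; linarith
  have h1' : (-1:ℤ) < z := by exact_mod_cast h1
  have h2' : z < 1 := by exact_mod_cast h2
  have hz0 : z = 0 := by omega
  apply S2ext; rw [hz0] at hz'; push_cast at hz'; linarith

lemma sd_rp_inj {o x y : S2} (h : rp o x = rp o y) (hs : sd o x ↔ sd o y) : x = y := by
  apply xi_inj (o := o)
  rw [xi_eq_rp, xi_eq_rp, h]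
  by_cases hx : sd o x
  · rw [if_pos hx, if_pos (hs.1 hx)]
  · rw [if_neg hx, if_neg (fun hy => hx (hs.2 hy))]

/-- THE central formula: the relation in side/representative coordinates. -/
lemma s2rel_iff (o x y : S2) :
    s2rel x y ↔ ((sd o x ↔ sd o y) ∧ rp o x < rp o y) ∨
      (¬(sd o x ↔ sd o y) ∧ rp o y < rp o x) := by
  have hd : Int.fract (y.1 - x.1) = Int.fract (xi o y - xi o x) := by
    have e1 : xi o x = x.1 - o.1 - ⌊x.1 - o.1⌋ := rfl
    have e2 : xi o y = y.1 - o.1 - ⌊y.1 - o.1⌋ := rfl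
    exact fract_congr (⌊y.1 - o.1⌋ - ⌊x.1 - o.1⌋) (by rw [e1, e2]; push_cast; ring)
  unfold s2rel sd rp
  rw [hd]
  set u := xi o x with hu'
  set v := xi o y with hv'
  have hu0 : 0 ≤ u := xi_nonneg o x
  have hu1 : u < 1 := xi_lt_one o x
  have hv0 : 0 ≤ v := xi_nonneg o y
  have hv1 : v < 1 := xi_lt_one o y
  by_cases hu : u < 1/2 <;> by_cases hv : v < 1/2
  · rw [if_pos hu, if_pos hv]
    rcases le_or_gt u v with hle | hlt
    · rw [fract_nn (by linarith) (by linarith)]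
      constructor
      · rintro ⟨h1, h2⟩; exact Or.inl ⟨iff_of_true hu hv, by linarith⟩
      · rintro (⟨_, h⟩ | ⟨hn, _⟩)
        · constructor <;> linarith
        · exact absurd (iff_of_true hu hv) hn
    · rw [fract_neg' (by linarith) (by linarith)]
      constructor
      · rintro ⟨h1, h2⟩; linarith
      · rintro (⟨_, h⟩ | ⟨hn, _⟩)
        · linarith
        · exact absurd (iff_of_true hu hv) hn
  · rw [if_pos hu, if_neg hv]
    have hlt : u < v := by push_neg at hv; linarith
    rw [fract_nn (by linarith) (by linarith)]
    constructor
    · rintro ⟨h1, h2⟩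
      exact Or.inr ⟨fun hiff => hv (hiff.1 hu), by linarith⟩
    · rintro (⟨hiff, _⟩ | ⟨_, h⟩)
      · exact absurd (hiff.1 hu) hv
      · constructor <;> linarith
  · rw [if_neg hu, if_pos hv]
    have hlt : v < u := by push_neg at hu; linarith
    rw [fract_neg' (by linarith) (by linarith)]
    constructor
    · rintro ⟨h1, h2⟩
      exact Or.inr ⟨fun hiff => hu (hiff.2 hv), by linarith⟩
    · rintro (⟨hiff, _⟩ | ⟨_, h⟩)
      · exact absurd (hiff.2 hv) hu
      · constructor <;> linarith
  · rw [if_neg hu, if_neg hv]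
    rcases le_or_gt u v with hle | hlt
    · rw [fract_nn (by linarith) (by linarith)]
      constructor
      · rintro ⟨h1, h2⟩
        exact Or.inl ⟨iff_of_false hu hv, by linarith⟩
      · rintro (⟨_, h⟩ | ⟨hn, _⟩)
        · constructor <;> linarith
        · exact absurd (iff_of_false hu hv) hn
    · rw [fract_neg' (by linarith) (by linarith)]
      constructor
      · rintro ⟨h1, h2⟩; linarith
      · rintro (⟨_, h⟩ | ⟨hn, _⟩)
        · linarith
        · exact absurd (iff_of_false hu hv) hn

-- tau and relation lemmas
def tau (x : S2) : S2 := mk (x.1 + 1/2)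

lemma fract_fract_sub (a b : ℚ) : Int.fract (Int.fract a - b) = Int.fract (a - b) := by
  have e : Int.fract a = a - ⌊a⌋ := rfl
  exact fract_congr (-⌊a⌋) (by rw [e]; push_cast; ring)

lemma xi_tau (o x : S2) : xi o (tau x) = Int.fract (xi o x + 1/2) := by
  unfold tau mk xi
  show Int.fract (Int.fract (x.1 + 1/2) - o.1) = _
  rw [fract_fract_sub]
  have e : Int.fract (x.1 - o.1) = x.1 - o.1 - ⌊x.1 - o.1⌋ := rfl
  exact fract_congr (⌊x.1 - o.1⌋) (by rw [e]; push_cast; ring)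

lemma xi_tau' (o x : S2) :
    xi o (tau x) = if xi o x < 1/2 then xi o x + 1/2 else xi o x - 1/2 := by
  rw [xi_tau]
  have h0 := xi_nonneg o x; have h1 := xi_lt_one o x
  split_ifs with h
  · exact fract_nn (by linarith) (by linarith)
  · push_neg at h
    have e : Int.fract (xi o x + 1/2) = Int.fract (xi o x - 1/2) :=
      fract_congr 1 (by push_cast; ring)
    rw [e]; exact fract_nn (by linarith) (by linarith)

lemma rp_tau (o x : S2) : rp o (tau x) = rp o x := by
  have h0 := xi_nonneg o x; have h1 := xi_lt_one o x
  by_cases h : xi o x < 1/2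
  · have h2 : ¬ (xi o x + 1/2 < 1/2) := by push_neg; linarith
    simp only [rp, xi_tau', if_pos h, if_neg h2]
    ring
  · have h2 : xi o x - 1/2 < 1/2 := by push_neg at h; linarith
    simp only [rp, xi_tau', if_neg h, if_pos h2]

lemma sd_tau (o x : S2) : sd o (tau x) ↔ ¬ sd o x := by
  have h0 := xi_nonneg o x; have h1 := xi_lt_one o x
  by_cases h : xi o x < 1/2
  · have h2 : ¬ (xi o x + 1/2 < 1/2) := by push_neg; linarith
    simp only [sd, xi_tau', if_pos h]
    constructor
    · intro h3; exact absurd h3 h2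
    · intro h3; exact absurd h h3
  · have h2 : xi o x - 1/2 < 1/2 := by push_neg at h; linarith
    simp only [sd, xi_tau', if_neg h]
    constructor
    · intro _; exact h
    · intro _; exact h2

lemma tau_tau (x : S2) : tau (tau x) = x := by
  set o : S2 := ⟨0, by norm_num⟩
  apply xi_inj (o := o)
  have h0 := xi_nonneg o x; have h1 := xi_lt_one o x
  rw [xi_tau']
  by_cases h : xi o x < 1/2
  · have h2 : ¬ (xi o x + 1/2 < 1/2) := by push_neg; linarith
    rw [xi_tau', if_pos h, if_neg h2]; ring
  · have h2 : xi o x - 1/2 < 1/2 := by push_neg at h; linarith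
    rw [xi_tau', if_neg h, if_pos h2]; ring

lemma tau_ne (x : S2) : tau x ≠ x := by
  intro h
  set o : S2 := ⟨0, by norm_num⟩
  have h2 := sd_tau o x
  rw [h] at h2
  exact iff_not_self h2

lemma tau_eq_of {o x y : S2} (h : rp o x = rp o y) (hs : ¬(sd o x ↔ sd o y)) : y = tau x := by
  apply sd_rp_inj (o := o)
  · rw [rp_tau]; exact h.symm
  · rw [sd_tau]; by_cases hx : sd o x <;> by_cases hy : sd o y <;> tauto

lemma not_iff_cases {p q : Prop} (h : ¬(p ↔ q)) : p ∧ ¬q ∨ ¬p ∧ q := by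
  by_cases hp : p <;> by_cases hq : q
  · exact absurd (iff_of_true hp hq) h
  · exact Or.inl ⟨hp, hq⟩
  · exact Or.inr ⟨hp, hq⟩
  · exact absurd (iff_of_false hp hq) h

def Unrel (x y : S2) : Prop := ¬ s2rel x y ∧ ¬ s2rel y x

lemma unrel_iff (o : S2) {x y : S2} : Unrel x y ↔ (y = x ∨ y = tau x) := by
  constructor
  · rintro ⟨h1, h2⟩
    rw [s2rel_iff o] at h1 h2
    push_neg at h1 h2
    by_cases hs : sd o x ↔ sd o y
    · left
      have a1 := h1.1 hs
      have a2 := h2.1 hs.symm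
      exact (sd_rp_inj (le_antisymm a2 a1) hs).symm
    · right
      have a1 := h1.2 (not_iff_cases hs)
      have a2 := h2.2 (not_iff_cases (fun h => hs h.symm))
      exact tau_eq_of (le_antisymm a1 a2) hs
  · rintro (rfl | rfl)
    · constructor <;> rw [s2rel_iff o] <;> rintro (⟨_, h⟩ | ⟨hn, _⟩) <;>
        first | exact lt_irrefl _ h | exact hn Iff.rfl
    · constructor <;> rw [s2rel_iff o] <;> rw [rp_tau, sd_tau] <;>
        rintro (⟨hi, h⟩ | ⟨hn, h⟩) <;>
        first
          | exact lt_irrefl _ h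
          | exact iff_not_self hi.symm
          | exact hn (by by_cases hx : sd o x <;> tauto)
          | skip

lemma rel_asymm {x y : S2} (h : s2rel x y) : ¬ s2rel y x := by
  set o : S2 := ⟨0, by norm_num⟩
  rw [s2rel_iff o] at h ⊢
  rintro (⟨hi, h2⟩ | ⟨hn, h2⟩) <;> rcases h with (⟨hi', h1⟩ | ⟨hn', h1⟩) <;>
    first | linarith | tauto

lemma rel_tau_right (x y : S2) : s2rel x (tau y) ↔ s2rel y x := by
  set o : S2 := ⟨0, by norm_num⟩
  rw [s2rel_iff o, s2rel_iff o, rp_tau, sd_tau]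
  by_cases hx : sd o x <;> by_cases hy : sd o y <;> simp [hx, hy]

lemma rel_tau_left (x y : S2) : s2rel (tau x) y ↔ s2rel y x := by
  set o : S2 := ⟨0, by norm_num⟩
  rw [s2rel_iff o, s2rel_iff o, rp_tau, sd_tau]
  by_cases hx : sd o x <;> by_cases hy : sd o y <;> simp [hx, hy]

lemma unrel_tau_left (x y : S2) : Unrel (tau x) y ↔ Unrel x y := by
  unfold Unrel
  rw [rel_tau_left, rel_tau_right]
  tauto

-- base point lemmas
lemma xi_self (o : S2) : xi o o = 0 := by unfold xi; rw [sub_self]; exact Int.fract_zero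

lemma rp_self (o : S2) : rp o o = 0 := by
  unfold rp; rw [xi_self]; norm_num

lemma sd_self (o : S2) : sd o o := by unfold sd; rw [xi_self]; norm_num

lemma rel_base_iff (o x : S2) : s2rel x o ↔ (¬ sd o x ∧ 0 < rp o x) := by
  rw [s2rel_iff o, rp_self]
  have hso := sd_self o
  constructor
  · rintro (⟨hi, h⟩ | ⟨hn, h⟩)
    · exact absurd h (by have := rp_nonneg o x; linarith)
    · exact ⟨fun hx => hn (iff_of_true hx hso), h⟩
  · rintro ⟨h1, h2⟩
    exact Or.inr ⟨fun hi => h1 (hi.2 hso), h2⟩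

lemma rel_base_iff' (o x : S2) : s2rel o x ↔ (sd o x ∧ 0 < rp o x) := by
  rw [s2rel_iff o, rp_self]
  have hso := sd_self o
  constructor
  · rintro (⟨hi, h⟩ | ⟨hn, h⟩)
    · exact ⟨hi.1 hso, h⟩
    · exact absurd h (by have := rp_nonneg o x; linarith)
  · rintro ⟨h1, h2⟩
    exact Or.inl ⟨iff_of_true hso h1, h2⟩

def InACl (A : Finset S2) (x : S2) : Prop := ∃ a ∈ A, Unrel x a

lemma InACl_iff (o : S2) {A : Finset S2} {x : S2} :
    InACl A x ↔ ∃ a ∈ A, rp o a = rp o x := by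
  constructor
  · rintro ⟨a, ha, hu⟩
    rcases (unrel_iff o).1 hu with h | h
    · exact ⟨a, ha, by rw [h]⟩
    · exact ⟨a, ha, by rw [h, rp_tau]⟩
  · rintro ⟨a, ha, hr⟩
    refine ⟨a, ha, (unrel_iff o).2 ?_⟩
    by_cases hs : sd o x ↔ sd o a
    · exact Or.inl (sd_rp_inj hr hs.symm)
    · exact Or.inr (tau_eq_of hr.symm hs)

lemma InACl_tau {A : Finset S2} {x : S2} : InACl A (tau x) ↔ InACl A x := by
  set o : S2 := ⟨0, by norm_num⟩
  rw [InACl_iff o, InACl_iff o]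
  constructor <;> rintro ⟨a, ha, h⟩ <;> refine ⟨a, ha, ?_⟩
  · rw [h, rp_tau]
  · rw [rp_tau]; exact h

lemma InACl_mono {A A' : Finset S2} {x : S2} (h : A ⊆ A') : InACl A x → InACl A' x := by
  rintro ⟨a, ha, hu⟩; exact ⟨a, h ha, hu⟩

def SameTp (A : Finset S2) (x y : S2) : Prop := ∀ a ∈ A, (s2rel x a ↔ s2rel y a)

lemma sametp_symm {A : Finset S2} {x y : S2} (h : SameTp A x y) : SameTp A y x :=
  fun a ha => (h a ha).symm

lemma sametp_trans {A : Finset S2} {x y z : S2} (h1 : SameTp A x y) (h2 : SameTp A y z) :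
    SameTp A x z := fun a ha => (h1 a ha).trans (h2 a ha)

lemma rel_coord {o x a : S2} (hx : rp o x ≠ rp o a) :
    s2rel x a ↔ (if sd o x ↔ sd o a then rp o x < rp o a else rp o a < rp o x) := by
  rw [s2rel_iff o]
  split_ifs with h
  · constructor
    · rintro (⟨_, h2⟩ | ⟨hn, _⟩)
      · exact h2
      · exact absurd h hn
    · intro h2; exact Or.inl ⟨h, h2⟩
  · constructor
    · rintro (⟨hi, _⟩ | ⟨_, h2⟩)
      · exact absurd hi h
      · exact h2
    · intro h2; exact Or.inr ⟨h, h2⟩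

lemma lt_flip {α : Type*} [LinearOrder α] {a b c d : α} (h : a < b ↔ c < d)
    (h1 : a ≠ b) (h2 : c ≠ d) : (b < a ↔ d < c) := by
  constructor <;> intro hl
  · rcases lt_trichotomy c d with h' | h' | h'
    · exact absurd (h.2 h') (lt_asymm hl)
    · exact absurd h' h2
    · exact h'
  · rcases lt_trichotomy a b with h' | h' | h'
    · exact absurd (h.1 h') (lt_asymm hl)
    · exact absurd h' h1
    · exact h'

lemma sametp_iff {A : Finset S2} {o x y : S2} (ho : o ∈ A)
    (hx : ¬ InACl A x) (hy : ¬ InACl A y) :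
    SameTp A x y ↔ ((sd o x ↔ sd o y) ∧ ∀ a ∈ A, (rp o x < rp o a ↔ rp o y < rp o a)) := by
  have hxa : ∀ a ∈ A, rp o x ≠ rp o a := fun a ha h =>
    hx ((InACl_iff o).2 ⟨a, ha, h.symm⟩)
  have hya : ∀ a ∈ A, rp o y ≠ rp o a := fun a ha h =>
    hy ((InACl_iff o).2 ⟨a, ha, h.symm⟩)
  have hx0 : 0 < rp o x := by
    have hne : rp o x ≠ 0 := fun h' => hxa o ho (by rw [h', rp_self])
    exact (rp_nonneg o x).lt_of_ne (Ne.symm hne)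
  have hy0 : 0 < rp o y := by
    have hne : rp o y ≠ 0 := fun h' => hya o ho (by rw [h', rp_self])
    exact (rp_nonneg o y).lt_of_ne (Ne.symm hne)
  constructor
  · intro h
    have hside : sd o x ↔ sd o y := by
      have h0 := h o ho
      rw [rel_base_iff, rel_base_iff] at h0
      constructor
      · intro hsx; by_contra hsy
        exact (h0.2 ⟨hsy, hy0⟩).1 hsx
      · intro hsy; by_contra hsx
        exact (h0.1 ⟨hsx, hx0⟩).1 hsy
    refine ⟨hside, fun a ha => ?_⟩
    have h1 := h a ha
    rw [rel_coord (hxa a ha), rel_coord (hya a ha)] at h1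
    by_cases hs : sd o x ↔ sd o a
    · rwa [if_pos hs, if_pos (hside.symm.trans hs)] at h1
    · rw [if_neg hs, if_neg (fun h' => hs (hside.trans h'))] at h1
      exact lt_flip h1 (fun h' => hxa a ha h'.symm) (fun h' => hya a ha h'.symm)
  · rintro ⟨hside, hcut⟩ a ha
    rw [rel_coord (hxa a ha), rel_coord (hya a ha)]
    by_cases hs : sd o x ↔ sd o a
    · rw [if_pos hs, if_pos (hside.symm.trans hs)]; exact hcut a ha
    · rw [if_neg hs, if_neg (fun h' => hs (hside.trans h'))]
      exact lt_flip (hcut a ha) (hxa a ha) (hya a ha)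

-- automorphism group facts  (note: these use defs Fixes/pimg/AutoS2 from the statement,
-- which are introduced later in the final file; here we restate minimal versions)
lemma auto_symm'' {g : Equiv.Perm S2} (hg : AutoS2 g) : AutoS2 g.symm := by
  intro a b
  have h := hg (g.symm a) (g.symm b)
  simp only [Equiv.apply_symm_apply] at h
  exact h.symm

lemma auto_unrel {g : Equiv.Perm S2} (hg : AutoS2 g) (x y : S2) :
    Unrel (g x) (g y) ↔ Unrel x y := by
  unfold Unrel; rw [hg x y, hg y x]

lemma auto_fix_tau {g : Equiv.Perm S2} (hg : AutoS2 g) {a : S2} (ha : g a = a) :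
    g (tau a) = tau a := by
  have h1 : Unrel a (tau a) := (unrel_iff a).2 (Or.inr rfl)
  have h2 : Unrel (g a) (g (tau a)) := (auto_unrel hg a (tau a)).2 h1
  rw [ha] at h2
  rcases (unrel_iff a).1 h2 with h | h
  · exfalso
    have : tau a = a := g.injective (by rw [h, ha])
    exact tau_ne a this
  · exact h

def IndR (A B C : Finset S2) : Prop :=
  ∀ b ∈ B, ¬ InACl A b → ∀ c : S2, (∃ c₀ ∈ C, Unrel c c₀) → ¬ InACl A c →
    SameTp A b c → s2rel b c

lemma IndR_base_mono {A A' B C : Finset S2} (hAA : A ⊆ A') (h : IndR A B C) :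
    IndR A' B C := by
  intro b hb hnb c hc hnc hst
  exact h b hb (fun h' => hnb (InACl_mono hAA h')) c hc (fun h' => hnc (InACl_mono hAA h'))
    (fun a ha => hst a (hAA ha))

lemma IndR_B_mono {A B B' C : Finset S2} (hB : B' ⊆ B) (h : IndR A B C) : IndR A B' C :=
  fun b hb => h b (hB hb)

lemma IndR_C_mono {A B C C' : Finset S2} (hC : C' ⊆ C) (h : IndR A B C) : IndR A B C' := by
  intro b hb hnb c hc hnc hst
  obtain ⟨c₀, hc₀, hu⟩ := hc
  exact h b hb hnb c ⟨c₀, hC hc₀, hu⟩ hnc hst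

lemma mem_pimg {g : Equiv.Perm S2} {A : Finset S2} {x : S2} :
    x ∈ pimg g A ↔ ∃ a ∈ A, g a = x := by
  unfold pimg
  rw [Finset.mem_map]
  constructor
  · rintro ⟨a, ha, rfl⟩; exact ⟨a, ha, rfl⟩
  · rintro ⟨a, ha, rfl⟩; exact ⟨a, ha, rfl⟩

lemma IndR_inv {A B C : Finset S2} (g : Equiv.Perm S2) (hg : AutoS2 g) (h : IndR A B C) :
    IndR (pimg g A) (pimg g B) (pimg g C) := by
  intro b' hb' hnb' c hc hnc hst
  obtain ⟨b, hb, rfl⟩ := mem_pimg.1 hb'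
  obtain ⟨c₀', hc₀', hu⟩ := hc
  obtain ⟨c₀, hc₀, rfl⟩ := mem_pimg.1 hc₀'
  set c' := g.symm c with hc'def
  have hcc : c = g c' := by simp [hc'def]
  have hUn : Unrel c' c₀ := by
    rw [hcc] at hu
    exact (auto_unrel hg c' c₀).1 hu
  have hnb : ¬ InACl A b := by
    rintro ⟨a, ha, hab⟩
    exact hnb' ⟨g a, mem_pimg.2 ⟨a, ha, rfl⟩, (auto_unrel hg b a).2 hab⟩
  have hnc' : ¬ InACl A c' := by
    rintro ⟨a, ha, hab⟩
    refine hnc ⟨g a, mem_pimg.2 ⟨a, ha, rfl⟩, ?_⟩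
    rw [hcc]
    exact (auto_unrel hg c' a).2 hab
  have hst' : SameTp A b c' := by
    intro a ha
    have h2 := hst (g a) (mem_pimg.2 ⟨a, ha, rfl⟩)
    rw [hcc] at h2
    rw [← hg b a, ← hg c' a]
    exact h2
  have hres := h b hb hnb c' ⟨c₀, hc₀, hUn⟩ hnc' hst'
  rw [hcc]
  exact (hg b c').2 hres


-- piecewise-linear mover on ℚ
def pl (a b x y q : ℚ) : ℚ :=
  if q ≤ a then q else if b ≤ q then q
  else if q ≤ x then a + (q - a) * ((y - a) / (x - a))
  else b + (q - b) * ((y - b) / (x - b))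

section Mover
variable {a b x y : ℚ} (hax : a < x) (hxb : x < b) (hay : a < y) (hyb : y < b)

lemma pl_lo {q : ℚ} (h : q ≤ a) : pl a b x y q = q := by unfold pl; rw [if_pos h]

lemma pl_hi {q : ℚ} (hab : a < b) (h : b ≤ q) : pl a b x y q = q := by
  unfold pl; rw [if_neg (by linarith), if_pos h]

include hax hay in
lemma pl_mid1 {q : ℚ} (h1 : a < q) (h2 : q ≤ x) (hxb : x < b) :
    pl a b x y q = a + (q - a) * ((y - a) / (x - a)) ∧
      a < pl a b x y q ∧ pl a b x y q ≤ y := by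
  have hk : 0 < (y - a) / (x - a) := div_pos (by linarith) (by linarith)
  have he : pl a b x y q = a + (q - a) * ((y - a) / (x - a)) := by
    unfold pl; rw [if_neg (by linarith), if_neg (by push_neg; linarith), if_pos h2]
  refine ⟨he, ?_, ?_⟩
  · rw [he]; nlinarith
  · rw [he]
    have : (q - a) * ((y - a) / (x - a)) ≤ (x - a) * ((y - a) / (x - a)) := by nlinarith
    have e2 : (x - a) * ((y - a) / (x - a)) = y - a := by
      rw [mul_comm]; exact div_mul_cancel₀ _ (by linarith)
    linarith

include hax hxb hyb in
lemma pl_mid2 {q : ℚ} (h1 : x < q) (h2 : q < b) (hay : a < y) :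
    pl a b x y q = b + (q - b) * ((y - b) / (x - b)) ∧
      y < pl a b x y q ∧ pl a b x y q < b := by
  have hk : 0 < (y - b) / (x - b) := div_pos_of_neg_of_neg (by linarith) (by linarith)
  have he : pl a b x y q = b + (q - b) * ((y - b) / (x - b)) := by
    unfold pl; rw [if_neg (by linarith), if_neg (by push_neg; linarith), if_neg (by push_neg; linarith)]
  refine ⟨he, ?_, ?_⟩
  · rw [he]
    have : (q - b) * ((y - b) / (x - b)) > (x - b) * ((y - b) / (x - b)) := by nlinarith
    have e2 : (x - b) * ((y - b) / (x - b)) = y - b := by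
      rw [mul_comm]; exact div_mul_cancel₀ _ (by linarith)
    linarith
  · rw [he]; nlinarith

include hax hxb hay hyb in
lemma pl_strictMono : StrictMono (pl a b x y) := by
  intro q q' hqq
  rcases le_or_gt q a with r0 | r0'
  · rw [pl_lo r0]
    rcases le_or_gt q' a with s0 | s0'
    · rw [pl_lo s0]; exact hqq
    · rcases le_or_gt q' x with s1 | s1'
      · have := pl_mid1 hax hay s0' s1 hxb (y := y)
        linarith [this.2.1]
      · rcases lt_or_ge q' b with s2 | s2'
        · have := pl_mid2 hax hxb hyb s1' s2 hay
          linarith [this.2.1]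
        · rw [pl_hi (by linarith) s2']; linarith
  · rcases le_or_gt q x with r1 | r1'
    · obtain ⟨e1, l1, u1⟩ := pl_mid1 hax hay r0' r1 hxb (y := y)
      rcases le_or_gt q' x with s1 | s1'
      · obtain ⟨e2, l2, u2⟩ := pl_mid1 hax hay (by linarith) s1 hxb (y := y)
        rw [e1, e2]
        have hk : 0 < (y - a) / (x - a) := div_pos (by linarith) (by linarith)
        nlinarith
      · rcases lt_or_ge q' b with s2 | s2'
        · obtain ⟨e2, l2, u2⟩ := pl_mid2 hax hxb hyb s1' s2 hay
          linarith
        · rw [pl_hi (by linarith) s2']; linarith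
    · rcases lt_or_ge q b with r2 | r2'
      · obtain ⟨e1, l1, u1⟩ := pl_mid2 hax hxb hyb r1' r2 hay
        rcases lt_or_ge q' b with s2 | s2'
        · obtain ⟨e2, l2, u2⟩ := pl_mid2 hax hxb hyb (by linarith) s2 hay
          rw [e1, e2]
          have hk : 0 < (y - b) / (x - b) := div_pos_of_neg_of_neg (by linarith) (by linarith)
          nlinarith
        · rw [pl_hi (by linarith) s2']; linarith
      · rw [pl_hi (by linarith) r2', pl_hi (by linarith) (by linarith)]; exact hqq

include hax hxb hay hyb in
lemma pl_left_inv : ∀ q, pl a b y x (pl a b x y q) = q := by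
  intro q
  rcases le_or_gt q a with r0 | r0'
  · rw [pl_lo r0, pl_lo r0]
  · rcases le_or_gt q x with r1 | r1'
    · obtain ⟨e1, l1, u1⟩ := pl_mid1 hax hay r0' r1 hxb (y := y)
      obtain ⟨e2, _, _⟩ := pl_mid1 hay hax l1 u1 hyb (y := x)
      rw [e2, e1]
      have hh1 : x - a ≠ 0 := by linarith
      have hh2 : y - a ≠ 0 := by linarith
      field_simp
      ring
    · rcases lt_or_ge q b with r2 | r2'
      · obtain ⟨e1, l1, u1⟩ := pl_mid2 hax hxb hyb r1' r2 hay
        obtain ⟨e2, _, _⟩ := pl_mid2 hay hyb hxb l1 u1 hax (y := x)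
        rw [e2, e1]
        have hx : x - b ≠ 0 := by linarith
        have hy : y - b ≠ 0 := by linarith
        field_simp
        ring
      · rw [pl_hi (by linarith) r2', pl_hi (by linarith) r2']

include hax hxb hay hyb in
lemma mover_exists :
    ∃ μ : ℚ ≃o ℚ, (∀ q, q ≤ a → μ q = q) ∧ (∀ q, b ≤ q → μ q = q) ∧ μ x = y := by
  refine ⟨⟨⟨pl a b x y, pl a b y x, pl_left_inv hax hxb hay hyb,
      pl_left_inv hay hyb hax hxb⟩, ?_⟩, ?_, ?_, ?_⟩
  · intro q q'
    exact (pl_strictMono hax hxb hay hyb).le_iff_le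
  · intro q h; exact pl_lo h
  · intro q h; exact pl_hi (by linarith) h
  · obtain ⟨e1, _, _⟩ := pl_mid1 hax hay hax le_rfl hxb (y := y)
    show pl a b x y x = y
    rw [e1]
    have e3 : (x-a)*(y-a)/(x-a) = y - a := by
      rw [mul_comm]; exact mul_div_cancel_right₀ _ (by linarith)
    have e4 : (x - a) * ((y - a) / (x - a)) = y - a := by
      rw [mul_comm]; exact div_mul_cancel₀ _ (by linarith)
    linarith

end Mover

-- range facts for half-interval order isos
lemma phi_range {φ : ℚ ≃o ℚ} (hout : ∀ q, q < 0 ∨ 1/2 ≤ q → φ q = q) :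
    ∀ q, 0 ≤ q → q < 1/2 → 0 ≤ φ q ∧ φ q < 1/2 := by
  intro q h0 h1
  constructor
  · by_contra h; push_neg at h
    have h2 := hout (φ q) (Or.inl h)
    have h3 := φ.injective h2
    rw [h3] at h
    linarith
  · by_contra h; push_neg at h
    have h2 := hout (φ q) (Or.inr h)
    have h3 := φ.injective h2
    rw [h3] at h
    linarith

lemma phi_zero {φ : ℚ ≃o ℚ} (hout : ∀ q, q < 0 ∨ 1/2 ≤ q → φ q = q) : φ 0 = 0 := by
  rcases lt_trichotomy (φ 0) 0 with h | h | h
  · exact φ.injective (hout (φ 0) (Or.inl h))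
  · exact h
  · exfalso
    obtain ⟨q, hq⟩ := φ.surjective (φ 0 / 2)
    rcases lt_trichotomy q 0 with h' | h' | h'
    · rw [hout q (Or.inl h')] at hq; linarith
    · rw [h'] at hq; linarith
    · have h2 : φ 0 < φ q := φ.strictMono h'
      rw [hq] at h2; linarith

lemma phi_symm_out {φ : ℚ ≃o ℚ} (hout : ∀ q, q < 0 ∨ 1/2 ≤ q → φ q = q) :
    ∀ q, q < 0 ∨ 1/2 ≤ q → φ.symm q = q := by
  intro q h
  conv_lhs => rw [← hout q h]
  exact φ.symm_apply_apply q

-- the builder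
lemma builder (X : Finset ℚ) : ∀ ψ : ℚ → ℚ,
    (∀ q ∈ X, 0 < q ∧ q < 1/2) →
    (∀ q ∈ X, 0 < ψ q ∧ ψ q < 1/2) →
    (∀ q ∈ X, ∀ q' ∈ X, q < q' → ψ q < ψ q') →
    ∃ φ : ℚ ≃o ℚ, (∀ q, q < 0 ∨ 1/2 ≤ q → φ q = q) ∧ ∀ q ∈ X, φ q = ψ q := by
  induction X using Finset.induction_on_max with
  | empty =>
    intro ψ _ _ _
    exact ⟨OrderIso.refl ℚ, fun q _ => rfl, fun q hq => absurd hq (Finset.notMem_empty q)⟩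
  | insert x0 s hmax ih =>
    intro ψ hX hψ hm
    obtain ⟨φ', hout', hval'⟩ := ih ψ
      (fun q hq => hX q (Finset.mem_insert_of_mem hq))
      (fun q hq => hψ q (Finset.mem_insert_of_mem hq))
      (fun q hq q' hq' => hm q (Finset.mem_insert_of_mem hq) q' (Finset.mem_insert_of_mem hq'))
    have hx0 := hX x0 (Finset.mem_insert_self x0 s)
    have hy0 := hψ x0 (Finset.mem_insert_self x0 s)
    set P := φ' x0 with hP
    have hrange' := phi_range hout'
    have hPbounds := hrange' x0 (le_of_lt hx0.1) hx0.2
    have hPpos : 0 < P := by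
      have := φ'.strictMono hx0.1
      rw [phi_zero hout'] at this
      exact this
    set M : ℚ := ((insert (0:ℚ) (s.image ψ)).max' (Finset.insert_nonempty _ _)) with hM
    have hM0 : 0 ≤ M := Finset.le_max' _ 0 (Finset.mem_insert_self _ _)
    have hMz : ∀ z ∈ s, ψ z ≤ M := fun z hz =>
      Finset.le_max' _ (ψ z) (Finset.mem_insert_of_mem (Finset.mem_image_of_mem ψ hz))
    have hMcases := Finset.max'_mem (insert (0:ℚ) (s.image ψ)) (Finset.insert_nonempty _ _)
    rw [← hM] at hMcases
    rw [Finset.mem_insert] at hMcases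
    have hMP : M < P := by
      rcases hMcases with h | h
      · rw [h]; exact hPpos
      · obtain ⟨z, hz, hzM⟩ := Finset.mem_image.1 h
        rw [← hzM, ← hval' z hz]
        exact φ'.strictMono (hmax z hz)
    have hMy : M < ψ x0 := by
      rcases hMcases with h | h
      · rw [h]; exact hy0.1
      · obtain ⟨z, hz, hzM⟩ := Finset.mem_image.1 h
        rw [← hzM]
        exact hm z (Finset.mem_insert_of_mem hz) x0 (Finset.mem_insert_self _ _) (hmax z hz)
    obtain ⟨μ, hμlo, hμhi, hμx⟩ := mover_exists hMP hPbounds.2 hMy hy0.2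
    refine ⟨φ'.trans μ, ?_, ?_⟩
    · intro q hq
      rw [OrderIso.trans_apply, hout' q hq]
      rcases hq with h | h
      · exact hμlo q (by linarith)
      · exact hμhi q h
    · intro q hq
      rcases Finset.mem_insert.1 hq with rfl | hq'
      · rw [OrderIso.trans_apply, ← hP, hμx]
      · rw [OrderIso.trans_apply, hval' q hq']
        exact hμlo (ψ q) (hMz q hq')


-- lifting an order iso of [0,1/2) to an automorphism of S2
def Phi (f : ℚ → ℚ) (q : ℚ) : ℚ := if q < 1/2 then f q else f (q - 1/2) + 1/2

section Lift
variable {φ : ℚ ≃o ℚ} (hout : ∀ q, q < 0 ∨ 1/2 ≤ q → φ q = q)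

include hout in
lemma Phi_range {ξ : ℚ} (h0 : 0 ≤ ξ) (h1 : ξ < 1) : 0 ≤ Phi φ ξ ∧ Phi φ ξ < 1 := by
  unfold Phi
  split_ifs with h
  · have := phi_range hout ξ h0 h
    exact ⟨this.1, by linarith [this.2]⟩
  · push_neg at h
    have := phi_range hout (ξ - 1/2) (by linarith) (by linarith)
    constructor <;> linarith [this.1, this.2]

include hout in
lemma Phi_inv {ξ : ℚ} (h0 : 0 ≤ ξ) (h1 : ξ < 1) :
    Phi (⇑φ.symm) (Phi (⇑φ) ξ) = ξ := by
  unfold Phi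
  split_ifs with h h2 h2
  · exact φ.symm_apply_apply ξ
  · exact absurd (phi_range hout ξ h0 h).2 h2
  · exfalso
    have := (phi_range hout (ξ - 1/2) (by push_neg at h; linarith) (by linarith)).1
    linarith
  · push_neg at h h2
    have e : φ (ξ - 1/2) + 1/2 - 1/2 = φ (ξ - 1/2) := by ring
    rw [e, φ.symm_apply_apply]
    ring

include hout in
lemma Phi_rel {ξ η : ℚ} (hξ0 : 0 ≤ ξ) (hξ1 : ξ < 1) (hη0 : 0 ≤ η) (hη1 : η < 1) :
    (0 < Int.fract (Phi (⇑φ) η - Phi (⇑φ) ξ) ∧ Int.fract (Phi (⇑φ) η - Phi (⇑φ) ξ) < 1/2) ↔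
      (0 < Int.fract (η - ξ) ∧ Int.fract (η - ξ) < 1/2) := by
  have hr := phi_range hout
  unfold Phi
  by_cases hξ : ξ < 1/2 <;> by_cases hη : η < 1/2
  · rw [if_pos hξ, if_pos hη]
    obtain ⟨u0, u1⟩ := hr ξ hξ0 hξ
    obtain ⟨v0, v1⟩ := hr η hη0 hη
    rcases le_or_gt ξ η with hle | hlt
    · have hle' : φ ξ ≤ φ η := φ.le_iff_le.2 hle
      rw [fract_nn (by linarith) (by linarith), fract_nn (by linarith) (by linarith)]
      constructor
      · rintro ⟨c1, _⟩
        have : ξ < η := φ.lt_iff_lt.1 (by linarith)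
        exact ⟨by linarith, by linarith⟩
      · rintro ⟨c1, _⟩
        have : φ ξ < φ η := φ.lt_iff_lt.2 (by linarith)
        exact ⟨by linarith, by linarith⟩
    · have hlt' : φ η < φ ξ := φ.lt_iff_lt.2 hlt
      rw [fract_neg' (by linarith) (by linarith), fract_neg' (by linarith) (by linarith)]
      constructor
      · rintro ⟨_, c2⟩; exfalso; linarith
      · rintro ⟨_, c2⟩; exfalso; linarith
  · rw [if_pos hξ, if_neg hη]
    push_neg at hη
    obtain ⟨u0, u1⟩ := hr ξ hξ0 hξ
    obtain ⟨v0, v1⟩ := hr (η - 1/2) (by linarith) (by linarith)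
    have d0 : 0 < φ (η - 1/2) + 1/2 - φ ξ := by linarith
    have d1 : φ (η - 1/2) + 1/2 - φ ξ < 1 := by linarith
    rw [fract_nn (by linarith) (by linarith), fract_nn (by linarith) (by linarith)]
    constructor
    · rintro ⟨_, c2⟩
      have : φ (η - 1/2) < φ ξ := by linarith
      have h3 : η - 1/2 < ξ := φ.lt_iff_lt.1 this
      exact ⟨by linarith, by linarith⟩
    · rintro ⟨_, c2⟩
      have h3 : φ (η - 1/2) < φ ξ := φ.lt_iff_lt.2 (by linarith)
      exact ⟨by linarith, by linarith⟩
  · rw [if_neg hξ, if_pos hη]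
    push_neg at hξ
    obtain ⟨u0, u1⟩ := hr (ξ - 1/2) (by linarith) (by linarith)
    obtain ⟨v0, v1⟩ := hr η hη0 hη
    rw [fract_neg' (by linarith) (by linarith), fract_neg' (by linarith) (by linarith)]
    constructor
    · rintro ⟨_, c2⟩
      have h3 : η < ξ - 1/2 := φ.lt_iff_lt.1 (by linarith)
      exact ⟨by linarith, by linarith⟩
    · rintro ⟨_, c2⟩
      have h3 : φ η < φ (ξ - 1/2) := φ.lt_iff_lt.2 (by linarith)
      exact ⟨by linarith, by linarith⟩
  · rw [if_neg hξ, if_neg hη]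
    push_neg at hξ hη
    obtain ⟨u0, u1⟩ := hr (ξ - 1/2) (by linarith) (by linarith)
    obtain ⟨v0, v1⟩ := hr (η - 1/2) (by linarith) (by linarith)
    rcases le_or_gt ξ η with hle | hlt
    · have hle' : φ (ξ - 1/2) ≤ φ (η - 1/2) := φ.le_iff_le.2 (by linarith)
      rw [fract_nn (by linarith) (by linarith), fract_nn (by linarith) (by linarith)]
      constructor
      · rintro ⟨c1, _⟩
        have : ξ - 1/2 < η - 1/2 := φ.lt_iff_lt.1 (by linarith)
        exact ⟨by linarith, by linarith⟩
      · rintro ⟨c1, _⟩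
        have : φ (ξ - 1/2) < φ (η - 1/2) := φ.lt_iff_lt.2 (by linarith)
        exact ⟨by linarith, by linarith⟩
    · have hlt' : φ (η - 1/2) < φ (ξ - 1/2) := φ.lt_iff_lt.2 (by linarith)
      rw [fract_neg' (by linarith) (by linarith), fract_neg' (by linarith) (by linarith)]
      constructor
      · rintro ⟨_, c2⟩; exfalso; linarith
      · rintro ⟨_, c2⟩; exfalso; linarith

lemma xi_mk_self (o : S2) {q : ℚ} (h0 : 0 ≤ q) (h1 : q < 1) :
    xi o (mk (o.1 + q)) = q := by
  unfold xi mk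
  show Int.fract (Int.fract (o.1 + q) - o.1) = q
  rw [fract_fract_sub]
  have e : o.1 + q - o.1 = q := by ring
  rw [e]
  exact fract_nn h0 h1

include hout in
lemma lift_exists (o : S2) :
    ∃ g : Equiv.Perm S2, AutoS2 g ∧ ∀ x : S2, xi o (g x) = Phi (⇑φ) (xi o x) := by
  have hso := phi_symm_out hout
  have key : ∀ (θ : ℚ ≃o ℚ), (∀ q, q < 0 ∨ 1/2 ≤ q → θ q = q) → ∀ x : S2,
      mk (o.1 + Phi (⇑θ.symm) (xi o (mk (o.1 + Phi (⇑θ) (xi o x))))) = x := by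
    intro θ hθ x
    have hx0 := xi_nonneg o x; have hx1 := xi_lt_one o x
    obtain ⟨hp0, hp1⟩ := Phi_range hθ hx0 hx1
    rw [xi_mk_self o hp0 hp1, Phi_inv hθ hx0 hx1]
    apply xi_inj (o := o)
    rw [xi_mk_self o hx0 hx1]
  refine ⟨⟨fun x => mk (o.1 + Phi (⇑φ) (xi o x)),
           fun x => mk (o.1 + Phi (⇑φ.symm) (xi o x)), key φ hout, ?_⟩, ?_, ?_⟩
  · intro x
    have h2 := key φ.symm hso x
    rw [OrderIso.symm_symm] at h2
    exact h2
  · intro x y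
    show s2rel (mk (o.1 + Phi (⇑φ) (xi o x))) (mk (o.1 + Phi (⇑φ) (xi o y))) ↔ s2rel x y
    unfold s2rel
    have hx0 := xi_nonneg o x; have hx1 := xi_lt_one o x
    have hy0 := xi_nonneg o y; have hy1 := xi_lt_one o y
    obtain ⟨px0, px1⟩ := Phi_range hout hx0 hx1
    obtain ⟨py0, py1⟩ := Phi_range hout hy0 hy1
    have e1 : Int.fract ((mk (o.1 + Phi (⇑φ) (xi o y))).1 - (mk (o.1 + Phi (⇑φ) (xi o x))).1)
        = Int.fract (Phi (⇑φ) (xi o y) - Phi (⇑φ) (xi o x)) := by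
      have ey : (mk (o.1 + Phi (⇑φ) (xi o y))).1 = Int.fract (o.1 + Phi (⇑φ) (xi o y)) := rfl
      have ex : (mk (o.1 + Phi (⇑φ) (xi o x))).1 = Int.fract (o.1 + Phi (⇑φ) (xi o x)) := rfl
      rw [ey, ex]
      have fy : Int.fract (o.1 + Phi (⇑φ) (xi o y)) =
          o.1 + Phi (⇑φ) (xi o y) - ⌊o.1 + Phi (⇑φ) (xi o y)⌋ := rfl
      have fx : Int.fract (o.1 + Phi (⇑φ) (xi o x)) =
          o.1 + Phi (⇑φ) (xi o x) - ⌊o.1 + Phi (⇑φ) (xi o x)⌋ := rfl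
      exact fract_congr (⌊o.1 + Phi (⇑φ) (xi o x)⌋ - ⌊o.1 + Phi (⇑φ) (xi o y)⌋)
        (by rw [fy, fx]; push_cast; ring)
    have e2 : Int.fract (y.1 - x.1) = Int.fract (xi o y - xi o x) := by
      have ex : xi o x = x.1 - o.1 - ⌊x.1 - o.1⌋ := rfl
      have ey : xi o y = y.1 - o.1 - ⌊y.1 - o.1⌋ := rfl
      exact fract_congr (⌊y.1 - o.1⌋ - ⌊x.1 - o.1⌋) (by rw [ex, ey]; push_cast; ring)
    rw [e1, e2]
    exact Phi_rel hout hx0 hx1 hy0 hy1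
  · intro x
    show xi o (mk (o.1 + Phi (⇑φ) (xi o x))) = Phi (⇑φ) (xi o x)
    exact xi_mk_self o (Phi_range hout (xi_nonneg o x) (xi_lt_one o x)).1
      (Phi_range hout (xi_nonneg o x) (xi_lt_one o x)).2

end Lift

-- THE extension lemma
lemma ext_lemma (E : Finset S2) (o : S2) (ho : o ∈ E) (p : S2 → S2)
    (hpo : p o = o)
    (hsd : ∀ x ∈ E, (sd o (p x) ↔ sd o x))
    (hlt : ∀ x ∈ E, ∀ y ∈ E, rp o x < rp o y → rp o (p x) < rp o (p y))
    (heq : ∀ x ∈ E, ∀ y ∈ E, rp o x = rp o y → rp o (p x) = rp o (p y)) :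
    ∃ g : Equiv.Perm S2, AutoS2 g ∧ ∀ x ∈ E, g x = p x := by
  classical
  have hp0 : ∀ x ∈ E, rp o x = 0 → rp o (p x) = 0 := by
    intro x hx h
    have h2 := heq x hx o ho (by rw [h, rp_self])
    rwa [hpo, rp_self] at h2
  have hppos : ∀ x ∈ E, 0 < rp o x → 0 < rp o (p x) := by
    intro x hx h
    have h2 := hlt o ho x hx (by rw [rp_self]; exact h)
    rwa [hpo, rp_self] at h2
  set ψ : ℚ → ℚ := fun q =>
    if h : ∃ z, z ∈ E ∧ rp o z = q ∧ q ≠ 0 then rp o (p h.choose) else q with hψdef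
  have ψ_spec : ∀ z ∈ E, rp o z ≠ 0 → ψ (rp o z) = rp o (p z) := by
    intro z hz hne
    have hex : ∃ w, w ∈ E ∧ rp o w = rp o z ∧ rp o z ≠ 0 := ⟨z, hz, rfl, hne⟩
    rw [hψdef]
    simp only
    rw [dif_pos hex]
    obtain ⟨hw1, hw2, _⟩ := hex.choose_spec
    exact heq _ hw1 z hz hw2
  set X : Finset ℚ := (E.filter (fun z => rp o z ≠ 0)).image (rp o) with hX
  have hb1 : ∀ q ∈ X, 0 < q ∧ q < 1/2 := by
    intro q hq
    obtain ⟨z, hz, rfl⟩ := Finset.mem_image.1 hq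
    obtain ⟨hz1, hz2⟩ := Finset.mem_filter.1 hz
    exact ⟨(rp_nonneg o z).lt_of_ne (Ne.symm hz2), rp_lt_half o z⟩
  have hb2 : ∀ q ∈ X, 0 < ψ q ∧ ψ q < 1/2 := by
    intro q hq
    obtain ⟨z, hz, rfl⟩ := Finset.mem_image.1 hq
    obtain ⟨hz1, hz2⟩ := Finset.mem_filter.1 hz
    rw [ψ_spec z hz1 hz2]
    exact ⟨hppos z hz1 ((rp_nonneg o z).lt_of_ne (Ne.symm hz2)), rp_lt_half o (p z)⟩
  have hb3 : ∀ q ∈ X, ∀ q' ∈ X, q < q' → ψ q < ψ q' := by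
    intro q hq q' hq' hlt'
    obtain ⟨z, hz, rfl⟩ := Finset.mem_image.1 hq
    obtain ⟨z', hz', rfl⟩ := Finset.mem_image.1 hq'
    obtain ⟨hz1, hz2⟩ := Finset.mem_filter.1 hz
    obtain ⟨hz1', hz2'⟩ := Finset.mem_filter.1 hz'
    rw [ψ_spec z hz1 hz2, ψ_spec z' hz1' hz2']
    exact hlt z hz1 z' hz1' hlt'
  obtain ⟨φ, hout, hval⟩ := builder X ψ hb1 hb2 hb3
  obtain ⟨g, hg, hgx⟩ := lift_exists hout o
  refine ⟨g, hg, ?_⟩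
  intro x hx
  apply xi_inj (o := o)
  rw [hgx x]
  rcases eq_or_lt_of_le (rp_nonneg o x) with hr0 | hrpos
  · by_cases hsx : sd o x
    · have hxo : x = o := sd_rp_inj (o := o) (by rw [← hr0, rp_self]) (iff_of_true hsx (sd_self o))
      subst hxo
      rw [hpo, xi_self]
      unfold Phi
      rw [if_pos (by norm_num : (0:ℚ) < 1/2)]
      exact phi_zero hout
    · have h1 : rp o (p x) = 0 := hp0 x hx (by rw [← hr0])
      have h2 : ¬ sd o (p x) := fun h => hsx ((hsd x hx).1 h)
      have e1 : xi o x = 1/2 := by rw [xi_eq_rp, if_neg hsx, ← hr0]; norm_num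
      have e2 : xi o (p x) = 1/2 := by rw [xi_eq_rp, if_neg h2, h1]; norm_num
      rw [e1, e2]
      unfold Phi
      rw [if_neg (by norm_num : ¬ ((1:ℚ)/2 < 1/2))]
      rw [show (1:ℚ)/2 - 1/2 = 0 by norm_num, phi_zero hout]
      norm_num
  · have hmem : rp o x ∈ X :=
      Finset.mem_image.2 ⟨x, Finset.mem_filter.2 ⟨hx, Ne.symm (ne_of_lt hrpos)⟩, rfl⟩
    have hv : φ (rp o x) = rp o (p x) := by
      rw [hval _ hmem, ψ_spec x hx (Ne.symm (ne_of_lt hrpos))]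
    by_cases hsx : sd o x
    · have e1 : xi o x = rp o x := by rw [xi_eq_rp, if_pos hsx]
      have e2 : xi o (p x) = rp o (p x) := by rw [xi_eq_rp, if_pos ((hsd x hx).2 hsx)]
      rw [e1, e2]
      unfold Phi
      rw [if_pos (rp_lt_half o x), hv]
    · have e1 : xi o x = rp o x + 1/2 := by rw [xi_eq_rp, if_neg hsx]
      have e2 : xi o (p x) = rp o (p x) + 1/2 := by
        rw [xi_eq_rp, if_neg (fun h => hsx ((hsd x hx).1 h))]
      rw [e1, e2]
      unfold Phi
      rw [if_neg (by push_neg; linarith [rp_nonneg o x] : ¬ (rp o x + 1/2 < 1/2))]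
      rw [show rp o x + 1/2 - 1/2 = rp o x by ring, hv]

-- cell arithmetic for the existence axiom
def cellFloor (K : Finset ℚ) (ρ : ℚ) : ℚ :=
  if h : (K.filter (· < ρ)).Nonempty then (K.filter (· < ρ)).max' h else 0

def cellMin (RC : Finset ℚ) (l : ℚ) : ℚ :=
  if h : ((insert (1/2 : ℚ) RC).filter (fun v => l < v)).Nonempty
  then ((insert (1/2 : ℚ) RC).filter (fun v => l < v)).min' h else 1/2

noncomputable def tgtval (K RC : Finset ℚ) (ρ : ℚ) : ℚ :=
  cellFloor K ρ + (ρ - cellFloor K ρ) *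
    ((cellMin RC (cellFloor K ρ) - cellFloor K ρ) / (2 * (1/2 - cellFloor K ρ)))

lemma cellFloor_spec {K : Finset ℚ} (h0K : (0:ℚ) ∈ K) {ρ : ℚ} (hρ : 0 < ρ) :
    cellFloor K ρ ∈ K ∧ cellFloor K ρ < ρ ∧ 0 ≤ cellFloor K ρ ∧
      ∀ k ∈ K, k < ρ → k ≤ cellFloor K ρ := by
  have hne : (K.filter (· < ρ)).Nonempty := ⟨0, Finset.mem_filter.2 ⟨h0K, hρ⟩⟩
  have e : cellFloor K ρ = (K.filter (· < ρ)).max' hne := by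
    unfold cellFloor; rw [dif_pos hne]
  have hmem := Finset.mem_filter.1 ((K.filter (· < ρ)).max'_mem hne)
  refine ⟨?_, ?_, ?_, ?_⟩
  · rw [e]; exact hmem.1
  · rw [e]; exact hmem.2
  · rw [e]
    exact Finset.le_max' (K.filter (· < ρ)) 0 (Finset.mem_filter.2 ⟨h0K, hρ⟩)
  · intro k hk hkρ
    rw [e]
    exact Finset.le_max' (K.filter (· < ρ)) k (Finset.mem_filter.2 ⟨hk, hkρ⟩)

lemma cellMin_spec (RC : Finset ℚ) {l : ℚ} (hl : l < 1/2) :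
    l < cellMin RC l ∧ cellMin RC l ≤ 1/2 ∧ ∀ v ∈ RC, l < v → cellMin RC l ≤ v := by
  have hne : ((insert (1/2 : ℚ) RC).filter (fun v => l < v)).Nonempty :=
    ⟨1/2, Finset.mem_filter.2 ⟨Finset.mem_insert_self _ _, hl⟩⟩
  have e : cellMin RC l = ((insert (1/2 : ℚ) RC).filter (fun v => l < v)).min' hne := by
    unfold cellMin; rw [dif_pos hne]
  have hmem := Finset.mem_filter.1 (Finset.min'_mem _ hne)
  refine ⟨?_, ?_, ?_⟩
  · rw [e]; exact hmem.2
  · rw [e]; exact Finset.min'_le _ _ (Finset.mem_filter.2 ⟨Finset.mem_insert_self _ _, hl⟩)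
  · intro v hv hlv
    rw [e]; exact Finset.min'_le _ _ (Finset.mem_filter.2 ⟨Finset.mem_insert_of_mem hv, hlv⟩)

lemma tgtval_spec {K : Finset ℚ} (h0K : (0:ℚ) ∈ K) (RC : Finset ℚ) {ρ : ℚ}
    (h1 : 0 < ρ) (h2 : ρ < 1/2) :
    cellFloor K ρ < tgtval K RC ρ ∧ tgtval K RC ρ < cellMin RC (cellFloor K ρ) ∧
      tgtval K RC ρ < ρ := by
  obtain ⟨hf1, hf2, hf3, hf4⟩ := cellFloor_spec h0K h1
  obtain ⟨hm1, hm2, hm3⟩ := cellMin_spec RC (by linarith : cellFloor K ρ < 1/2)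
  set l := cellFloor K ρ
  set mm := cellMin RC l
  have hden : 0 < 2 * (1/2 - l) := by linarith
  have hfrac : 0 < (mm - l) / (2 * (1/2 - l)) := div_pos (by linarith) hden
  have hfrac2 : (mm - l) / (2 * (1/2 - l)) ≤ 1/2 := by
    rw [div_le_iff₀ hden]; linarith
  have e2 : (1/2 - l) * ((mm - l) / (2 * (1/2 - l))) = (mm - l)/2 := by
    have hlne : (1/2 : ℚ) - l ≠ 0 := by linarith
    rw [← mul_div_assoc, mul_comm 2 ((1:ℚ)/2 - l), mul_div_mul_left _ _ hlne]
  refine ⟨?_, ?_, ?_⟩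
  · unfold tgtval; nlinarith
  · unfold tgtval
    have h3 : (ρ - l) * ((mm - l) / (2 * (1/2 - l)))
        < (1/2 - l) * ((mm - l) / (2 * (1/2 - l))) :=
      mul_lt_mul_of_pos_right (by linarith) hfrac
    nlinarith
  · unfold tgtval
    have h3 : (ρ - l) * ((mm - l) / (2 * (1/2 - l))) ≤ (ρ - l) * (1/2) :=
      mul_le_mul_of_nonneg_left hfrac2 (by linarith)
    linarith

lemma tgtval_mono {K : Finset ℚ} (h0K : (0:ℚ) ∈ K) (RC : Finset ℚ) {ρ1 ρ2 : ℚ}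
    (h10 : 0 < ρ1) (h1h : ρ1 < 1/2) (h20 : 0 < ρ2) (h2h : ρ2 < 1/2)
    (h1K : ρ1 ∉ K) (hlt : ρ1 < ρ2) :
    tgtval K RC ρ1 < tgtval K RC ρ2 := by
  obtain ⟨ha1, ha2, ha3, ha4⟩ := cellFloor_spec h0K h10
  obtain ⟨hb1, hb2, hb3, hb4⟩ := cellFloor_spec h0K h20
  by_cases he : cellFloor K ρ1 = cellFloor K ρ2
  · obtain ⟨hm1, hm2, hm3⟩ := cellMin_spec RC (by linarith : cellFloor K ρ1 < 1/2)
    unfold tgtval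
    rw [← he]
    set l := cellFloor K ρ1
    set mm := cellMin RC l
    have hden : 0 < 2 * (1/2 - l) := by linarith
    have hfrac : 0 < (mm - l) / (2 * (1/2 - l)) := div_pos (by linarith) hden
    have h3 : (ρ1 - l) * ((mm - l) / (2 * (1/2 - l)))
        < (ρ2 - l) * ((mm - l) / (2 * (1/2 - l))) :=
      mul_lt_mul_of_pos_right (by linarith) hfrac
    linarith
  · have hρ1l2 : ρ1 < cellFloor K ρ2 := by
      rcases lt_trichotomy (cellFloor K ρ2) ρ1 with h | h | h
      · exfalso
        have h5 := ha4 _ hb1 h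
        have h6 := hb4 _ ha1 (by linarith)
        exact he (le_antisymm h6 h5)
      · exact absurd (h ▸ hb1) h1K
      · exact h
    have t1 := (tgtval_spec h0K RC h10 h1h).2.2
    have t2 := (tgtval_spec h0K RC h20 h2h).1
    linarith

lemma tgtval_cut {K : Finset ℚ} (h0K : (0:ℚ) ∈ K) (RC : Finset ℚ) {ρ : ℚ}
    (h1 : 0 < ρ) (h2 : ρ < 1/2) (hρK : ρ ∉ K) :
    ∀ k ∈ K, (tgtval K RC ρ < k ↔ ρ < k) := by
  intro k hk
  obtain ⟨hf1, hf2, hf3, hf4⟩ := cellFloor_spec h0K h1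
  obtain ⟨t1, t2, t3⟩ := tgtval_spec h0K RC h1 h2
  constructor
  · intro h
    rcases lt_trichotomy ρ k with h' | h' | h'
    · exact h'
    · exact absurd (h' ▸ hk) hρK
    · exact absurd (by linarith [hf4 k hk h'] : ¬ (tgtval K RC ρ < k)) (fun hh => hh h)
  · intro h; linarith

lemma rel_irrefl (x : S2) : ¬ s2rel x x := by
  intro h
  rcases (s2rel_iff x x x).1 h with ⟨_, h2⟩ | ⟨hn, _⟩
  · exact lt_irrefl _ h2
  · exact hn Iff.rfl

lemma unrel_self (x : S2) : Unrel x x := ⟨rel_irrefl x, rel_irrefl x⟩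

lemma inacl_mem {A : Finset S2} {a : S2} (ha : a ∈ A) : InACl A a := ⟨a, ha, unrel_self a⟩

lemma notInACl_iff (o : S2) {A : Finset S2} {x : S2} :
    ¬ InACl A x ↔ rp o x ∉ A.image (rp o) := by
  rw [InACl_iff o]
  constructor
  · intro h hm
    obtain ⟨a, ha, hr⟩ := Finset.mem_image.1 hm
    exact h ⟨a, ha, hr⟩
  · intro h hm
    obtain ⟨a, ha, hr⟩ := hm
    exact h (Finset.mem_image.2 ⟨a, ha, hr⟩)

lemma mkpt_coords (o : S2) {v : ℚ} (h0 : 0 ≤ v) (h1 : v < 1/2) (s : Prop) [Decidable s] :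
    rp o (mk (o.1 + (if s then v else v + 1/2))) = v ∧
      (sd o (mk (o.1 + (if s then v else v + 1/2))) ↔ s) := by
  by_cases hs : s
  · rw [if_pos hs]
    have hxi : xi o (mk (o.1 + v)) = v := xi_mk_self o h0 (by linarith)
    constructor
    · unfold rp; rw [hxi, if_pos h1]
    · unfold sd; rw [hxi]; exact iff_of_true h1 hs
  · rw [if_neg hs]
    have hxi : xi o (mk (o.1 + (v + 1/2))) = v + 1/2 := xi_mk_self o (by linarith) (by linarith)
    have hnot : ¬ (v + 1/2 < 1/2) := by push_neg; linarith
    constructor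
    · unfold rp; rw [hxi, if_neg hnot]; ring
    · unfold sd; rw [hxi]; exact iff_of_false hnot hs

lemma ex_left (A B C : Finset S2) (hA : A.Nonempty) :
    ∃ g : Equiv.Perm S2, AutoS2 g ∧ (∀ a ∈ A, g a = a) ∧ IndR A (pimg g B) C := by
  classical
  obtain ⟨o, ho⟩ := hA
  set K : Finset ℚ := A.image (rp o) with hK
  set RC : Finset ℚ := C.image (rp o) with hRC
  have h0K : (0:ℚ) ∈ K := Finset.mem_image.2 ⟨o, ho, rp_self o⟩
  set T : ℚ → ℚ := tgtval K RC with hT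
  set p : S2 → S2 := fun x => if InACl A x then x else
    mk (o.1 + (if sd o x then T (rp o x) else T (rp o x) + 1/2)) with hp
  have hgood : ∀ x : S2, ¬ InACl A x → 0 < rp o x ∧ rp o x ∉ K := by
    intro x hx
    have h2 : rp o x ∉ K := by rw [hK]; exact (notInACl_iff o).1 hx
    refine ⟨?_, h2⟩
    rcases eq_or_lt_of_le (rp_nonneg o x) with h | h
    · exact absurd (h ▸ h0K) h2
    · exact h
  have hTrange : ∀ x : S2, ¬ InACl A x → 0 < T (rp o x) ∧ T (rp o x) < 1/2 := by
    intro x hx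
    obtain ⟨h1, h2⟩ := hgood x hx
    obtain ⟨t1, t2, t3⟩ := tgtval_spec h0K RC h1 (rp_lt_half o x)
    have hf := (cellFloor_spec h0K h1).2.2.1
    exact ⟨by rw [hT]; linarith, by rw [hT]; linarith [rp_lt_half o x]⟩
  have hpcoords : ∀ x : S2, ¬ InACl A x →
      rp o (p x) = T (rp o x) ∧ (sd o (p x) ↔ sd o x) := by
    intro x hx
    obtain ⟨r0, r1⟩ := hTrange x hx
    have e : p x = mk (o.1 + (if sd o x then T (rp o x) else T (rp o x) + 1/2)) := by
      simp only [hp]; rw [if_neg hx]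
    rw [e]
    exact mkpt_coords o (le_of_lt r0) r1 (sd o x)
  have hpid : ∀ x : S2, InACl A x → p x = x := by
    intro x hx; simp only [hp]; rw [if_pos hx]
  have key_lt : ∀ x y : S2, rp o x < rp o y → rp o (p x) < rp o (p y) := by
    intro x y hxy
    by_cases hx : InACl A x <;> by_cases hy : InACl A y
    · rw [hpid x hx, hpid y hy]; exact hxy
    · obtain ⟨hy1, hy2⟩ := hgood y hy
      have hxK : rp o x ∈ K := by
        rw [hK]
        obtain ⟨a, ha, hr⟩ := (InACl_iff o).1 hx
        exact Finset.mem_image.2 ⟨a, ha, hr⟩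
      rw [hpid x hx, (hpcoords y hy).1]
      have h4 := (cellFloor_spec h0K hy1).2.2.2 _ hxK hxy
      have t1 := (tgtval_spec h0K RC hy1 (rp_lt_half o y)).1
      rw [hT]; linarith
    · obtain ⟨hx1, hx2⟩ := hgood x hx
      rw [hpid y hy, (hpcoords x hx).1]
      have t3 := (tgtval_spec h0K RC hx1 (rp_lt_half o x)).2.2
      rw [hT]; linarith
    · obtain ⟨hx1, hx2⟩ := hgood x hx
      obtain ⟨hy1, hy2⟩ := hgood y hy
      rw [(hpcoords x hx).1, (hpcoords y hy).1, hT]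
      exact tgtval_mono h0K RC hx1 (rp_lt_half o x) hy1 (rp_lt_half o y) hx2 hxy
  have key_eq : ∀ x y : S2, rp o x = rp o y → rp o (p x) = rp o (p y) := by
    intro x y hxy
    by_cases hx : InACl A x <;> by_cases hy : InACl A y
    · rw [hpid x hx, hpid y hy]; exact hxy
    · exfalso; apply hy
      obtain ⟨a, ha, hr⟩ := (InACl_iff o).1 hx
      exact (InACl_iff o).2 ⟨a, ha, by rw [hr, hxy]⟩
    · exfalso; apply hx
      obtain ⟨a, ha, hr⟩ := (InACl_iff o).1 hy
      exact (InACl_iff o).2 ⟨a, ha, by rw [hr, ← hxy]⟩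
    · rw [(hpcoords x hx).1, (hpcoords y hy).1, hxy]
  have hsd_all : ∀ x : S2, (sd o (p x) ↔ sd o x) := by
    intro x
    by_cases hx : InACl A x
    · rw [hpid x hx]
    · exact (hpcoords x hx).2
  have hpo : p o = o := hpid o (inacl_mem ho)
  obtain ⟨g, hg, hgeq⟩ := ext_lemma (A ∪ B) o (Finset.mem_union_left B ho) p hpo
    (fun x _ => hsd_all x) (fun x _ y _ => key_lt x y) (fun x _ y _ => key_eq x y)
  refine ⟨g, hg, ?_, ?_⟩
  · intro a ha
    rw [hgeq a (Finset.mem_union_left B ha), hpid a (inacl_mem ha)]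
  · intro b' hb' hnb' c hc hnc hst
    obtain ⟨b, hbB, rfl⟩ := mem_pimg.1 hb'
    have hgb : g b = p b := hgeq b (Finset.mem_union_right A hbB)
    by_cases hbI : InACl A b
    · rw [hgb, hpid b hbI] at hnb'
      exact absurd hbI hnb'
    · rw [hgb] at hnb' hst ⊢
      obtain ⟨hb1, hb2⟩ := hgood b hbI
      obtain ⟨ec1, ec2⟩ := hpcoords b hbI
      obtain ⟨t1, t2, t3⟩ := tgtval_spec h0K RC hb1 (rp_lt_half o b)
      obtain ⟨c₀, hc₀, hu⟩ := hc
      have hrc : rp o c ∈ RC := by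
        rw [hRC]
        rcases (unrel_iff o).1 hu with h | h
        · exact Finset.mem_image.2 ⟨c₀, hc₀, by rw [h]⟩
        · exact Finset.mem_image.2 ⟨c₀, hc₀, by rw [h, rp_tau]⟩
      rw [sametp_iff (A := A) (o := o) ho hnb' hnc] at hst
      obtain ⟨hside, hcut⟩ := hst
      have hfK : cellFloor K (rp o b) ∈ K := (cellFloor_spec h0K hb1).1
      obtain ⟨af, haf, hafr⟩ := Finset.mem_image.1 (by rw [hK] at hfK; exact hfK)
      have h5 : ¬ (rp o (p b) < rp o af) := by
        rw [ec1, hafr, hT]; push_neg; linarith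
      have h6 : ¬ (rp o c < rp o af) := fun h => h5 ((hcut af haf).2 h)
      have h7 : rp o c ≠ rp o af := fun h => hnc ((InACl_iff o).2 ⟨af, haf, h.symm⟩)
      have h8 : cellFloor K (rp o b) < rp o c := by
        rw [hafr] at h6 h7
        push_neg at h6
        exact h6.lt_of_ne (Ne.symm h7)
      have h9 := (cellMin_spec RC (by linarith [rp_lt_half o b] :
        cellFloor K (rp o b) < 1/2)).2.2 _ hrc h8
      rw [s2rel_iff o]
      exact Or.inl ⟨hside, by rw [ec1, hT]; linarith⟩

-- mirror machinery for exRight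
def cellUp (K : Finset ℚ) (ρ : ℚ) : ℚ :=
  if h : ((insert (1/2 : ℚ) K).filter (fun v => ρ < v)).Nonempty
  then ((insert (1/2 : ℚ) K).filter (fun v => ρ < v)).min' h else 1/2

def baseMax (S : Finset ℚ) (u : ℚ) : ℚ :=
  if h : ((insert (0:ℚ) S).filter (· < u)).Nonempty
  then ((insert (0:ℚ) S).filter (· < u)).max' h else 0

noncomputable def tgtval2 (K S : Finset ℚ) (ρ : ℚ) : ℚ :=
  cellUp K ρ - (cellUp K ρ - ρ) *
    ((cellUp K ρ - baseMax S (cellUp K ρ)) / (2 * cellUp K ρ))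

lemma cellUp_spec (K : Finset ℚ) {ρ : ℚ} (hρ : ρ < 1/2) :
    ρ < cellUp K ρ ∧ cellUp K ρ ≤ 1/2 ∧
      (∀ k ∈ insert (1/2:ℚ) K, ρ < k → cellUp K ρ ≤ k) ∧
      cellUp K ρ ∈ insert (1/2:ℚ) K := by
  have hne : ((insert (1/2 : ℚ) K).filter (fun v => ρ < v)).Nonempty :=
    ⟨1/2, Finset.mem_filter.2 ⟨Finset.mem_insert_self _ _, hρ⟩⟩
  have e : cellUp K ρ = ((insert (1/2 : ℚ) K).filter (fun v => ρ < v)).min' hne := by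
    unfold cellUp; rw [dif_pos hne]
  have hmem := Finset.mem_filter.1 (Finset.min'_mem _ hne)
  refine ⟨?_, ?_, ?_, ?_⟩
  · rw [e]; exact hmem.2
  · rw [e]; exact Finset.min'_le _ _ (Finset.mem_filter.2 ⟨Finset.mem_insert_self _ _, hρ⟩)
  · intro k hk hkρ
    rw [e]; exact Finset.min'_le _ _ (Finset.mem_filter.2 ⟨hk, hkρ⟩)
  · rw [e]; exact hmem.1

lemma baseMax_spec (S : Finset ℚ) {u : ℚ} (hu : 0 < u) :
    baseMax S u < u ∧ 0 ≤ baseMax S u ∧ (∀ v ∈ S, v < u → v ≤ baseMax S u) := by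
  have hne : ((insert (0:ℚ) S).filter (· < u)).Nonempty :=
    ⟨0, Finset.mem_filter.2 ⟨Finset.mem_insert_self _ _, hu⟩⟩
  have e : baseMax S u = ((insert (0:ℚ) S).filter (· < u)).max' hne := by
    unfold baseMax; rw [dif_pos hne]
  have hmem := Finset.mem_filter.1 (Finset.max'_mem _ hne)
  refine ⟨?_, ?_, ?_⟩
  · rw [e]; exact hmem.2
  · rw [e]
    exact Finset.le_max' ((insert (0:ℚ) S).filter (· < u)) 0
      (Finset.mem_filter.2 ⟨Finset.mem_insert_self _ _, hu⟩)
  · intro v hv hvu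
    rw [e]
    exact Finset.le_max' ((insert (0:ℚ) S).filter (· < u)) v
      (Finset.mem_filter.2 ⟨Finset.mem_insert_of_mem hv, hvu⟩)

lemma tgtval2_spec (K S : Finset ℚ) {ρ : ℚ} (h1 : 0 < ρ) (h2 : ρ < 1/2) :
    baseMax S (cellUp K ρ) < tgtval2 K S ρ ∧ tgtval2 K S ρ < cellUp K ρ := by
  obtain ⟨hu1, hu2, hu3, hu4⟩ := cellUp_spec K h2
  have hu0 : 0 < cellUp K ρ := by linarith
  obtain ⟨hM1, hM2, hM3⟩ := baseMax_spec S hu0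
  set u := cellUp K ρ
  set M := baseMax S u
  have hden : 0 < 2 * u := by linarith
  have hfrac : 0 < (u - M) / (2 * u) := div_pos (by linarith) hden
  have hfrac2 : (u - ρ) * ((u - M) / (2 * u)) < (u - M) / 2 := by
    have e1 : u * ((u - M) / (2 * u)) = (u - M) / 2 := by
      have hune : u ≠ 0 := by linarith
      rw [← mul_div_assoc]
      rw [show 2 * u = u * 2 by ring, mul_div_mul_left _ _ hune]
    have h3 : (u - ρ) * ((u - M) / (2 * u)) < u * ((u - M) / (2 * u)) :=
      mul_lt_mul_of_pos_right (by linarith) hfrac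
    linarith
  constructor
  · unfold tgtval2; linarith
  · unfold tgtval2
    have h4 : 0 < (u - ρ) * ((u - M) / (2 * u)) := mul_pos (by linarith) hfrac
    linarith

lemma tgtval2_mono (K S : Finset ℚ) (hKS : K ⊆ S) {ρ1 ρ2 : ℚ}
    (h10 : 0 < ρ1) (h1h : ρ1 < 1/2) (h20 : 0 < ρ2) (h2h : ρ2 < 1/2)
    (hlt : ρ1 < ρ2) : tgtval2 K S ρ1 < tgtval2 K S ρ2 := by
  obtain ⟨ha1, ha2, ha3, ha4⟩ := cellUp_spec K h1h
  obtain ⟨hb1, hb2, hb3, hb4⟩ := cellUp_spec K h2h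
  have hu12 : cellUp K ρ1 ≤ cellUp K ρ2 := ha3 _ hb4 (by linarith)
  rcases eq_or_lt_of_le hu12 with he | he
  · unfold tgtval2
    rw [← he]
    have hu0 : 0 < cellUp K ρ1 := by linarith
    obtain ⟨hM1, hM2, hM3⟩ := baseMax_spec S hu0
    set u := cellUp K ρ1
    set M := baseMax S u
    have hfrac : 0 < (u - M) / (2 * u) := div_pos (by linarith) (by linarith)
    have h3 : (u - ρ2) * ((u - M) / (2 * u)) < (u - ρ1) * ((u - M) / (2 * u)) :=
      mul_lt_mul_of_pos_right (by linarith) hfrac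
    linarith
  · have hu1ρ2 : cellUp K ρ1 ≤ ρ2 := by
      by_contra h
      push_neg at h
      exact absurd (hb3 _ ha4 h) (by linarith)
    have hu1K : cellUp K ρ1 ∈ K := by
      rcases Finset.mem_insert.1 ha4 with h | h
      · exfalso; rw [h] at hu1ρ2; linarith
      · exact h
    have hu20 : 0 < cellUp K ρ2 := by linarith
    obtain ⟨hM1, hM2, hM3⟩ := baseMax_spec S hu20
    have hle : cellUp K ρ1 ≤ baseMax S (cellUp K ρ2) := hM3 _ (hKS hu1K) he
    have t1 := (tgtval2_spec K S h10 h1h).2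
    have t2 := (tgtval2_spec K S h20 h2h).1
    linarith

lemma tgtval2_cut (K S : Finset ℚ) (hKS : K ⊆ S) {ρ : ℚ}
    (h1 : 0 < ρ) (h2 : ρ < 1/2) (hρK : ρ ∉ K) :
    ∀ k ∈ K, (tgtval2 K S ρ < k ↔ ρ < k) := by
  intro k hk
  obtain ⟨hu1, hu2, hu3, hu4⟩ := cellUp_spec K h2
  have hu0 : 0 < cellUp K ρ := by linarith
  obtain ⟨hM1, hM2, hM3⟩ := baseMax_spec S hu0
  obtain ⟨t1, t2⟩ := tgtval2_spec K S h1 h2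
  constructor
  · intro h
    rcases lt_trichotomy ρ k with h' | h' | h'
    · exact h'
    · exact absurd (h' ▸ hk) hρK
    · exfalso
      have h5 : k ≤ baseMax S (cellUp K ρ) := hM3 _ (hKS hk) (by linarith)
      linarith
  · intro h
    have h5 := hu3 k (Finset.mem_insert_of_mem hk) h
    linarith

lemma ex_right (A B C : Finset S2) (hA : A.Nonempty) :
    ∃ g : Equiv.Perm S2, AutoS2 g ∧ (∀ a ∈ A, g a = a) ∧ IndR A B (pimg g C) := by
  classical
  obtain ⟨o, ho⟩ := hA
  set K : Finset ℚ := A.image (rp o) with hK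
  set S : Finset ℚ := (B.image (rp o)) ∪ K with hS
  have hKS : K ⊆ S := Finset.subset_union_right
  have h0K : (0:ℚ) ∈ K := Finset.mem_image.2 ⟨o, ho, rp_self o⟩
  set T : ℚ → ℚ := tgtval2 K S with hT
  set p : S2 → S2 := fun x => if InACl A x then x else
    mk (o.1 + (if sd o x then T (rp o x) else T (rp o x) + 1/2)) with hp
  have hgood : ∀ x : S2, ¬ InACl A x → 0 < rp o x ∧ rp o x ∉ K := by
    intro x hx
    have h2 : rp o x ∉ K := by rw [hK]; exact (notInACl_iff o).1 hx
    refine ⟨?_, h2⟩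
    rcases eq_or_lt_of_le (rp_nonneg o x) with h | h
    · exact absurd (h ▸ h0K) h2
    · exact h
  have hTrange : ∀ x : S2, ¬ InACl A x → 0 < T (rp o x) ∧ T (rp o x) < 1/2 := by
    intro x hx
    obtain ⟨h1, h2⟩ := hgood x hx
    obtain ⟨t1, t2⟩ := tgtval2_spec K S h1 (rp_lt_half o x)
    have hc := cellUp_spec K (rp_lt_half o x)
    have hu0 : 0 < cellUp K (rp o x) := by linarith [hc.1]
    have hM := (baseMax_spec S hu0).2.1
    exact ⟨by rw [hT]; linarith, by rw [hT]; linarith [hc.2.1]⟩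
  have hpcoords : ∀ x : S2, ¬ InACl A x →
      rp o (p x) = T (rp o x) ∧ (sd o (p x) ↔ sd o x) := by
    intro x hx
    obtain ⟨r0, r1⟩ := hTrange x hx
    have e : p x = mk (o.1 + (if sd o x then T (rp o x) else T (rp o x) + 1/2)) := by
      simp only [hp]; rw [if_neg hx]
    rw [e]
    exact mkpt_coords o (le_of_lt r0) r1 (sd o x)
  have hpid : ∀ x : S2, InACl A x → p x = x := by
    intro x hx; simp only [hp]; rw [if_pos hx]
  have key_lt : ∀ x y : S2, rp o x < rp o y → rp o (p x) < rp o (p y) := by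
    intro x y hxy
    by_cases hx : InACl A x <;> by_cases hy : InACl A y
    · rw [hpid x hx, hpid y hy]; exact hxy
    · obtain ⟨hy1, hy2⟩ := hgood y hy
      have hxK : rp o x ∈ K := by
        rw [hK]
        obtain ⟨a, ha, hr⟩ := (InACl_iff o).1 hx
        exact Finset.mem_image.2 ⟨a, ha, hr⟩
      rw [hpid x hx, (hpcoords y hy).1]
      have hcup := cellUp_spec K (rp_lt_half o y)
      have hu0 : 0 < cellUp K (rp o y) := by linarith [hcup.1]
      have hxu : rp o x < cellUp K (rp o y) := by linarith [hcup.1]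
      have hxM := (baseMax_spec S hu0).2.2 _ (hKS hxK) hxu
      have ht := (tgtval2_spec K S hy1 (rp_lt_half o y)).1
      rw [hT]
      linarith
    · obtain ⟨hx1, hx2⟩ := hgood x hx
      have hyK : rp o y ∈ K := by
        rw [hK]
        obtain ⟨a, ha, hr⟩ := (InACl_iff o).1 hy
        exact Finset.mem_image.2 ⟨a, ha, hr⟩
      rw [hpid y hy, (hpcoords x hx).1, hT]
      exact (tgtval2_cut K S hKS hx1 (rp_lt_half o x) hx2 _ hyK).2 hxy
    · obtain ⟨hx1, hx2⟩ := hgood x hx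
      obtain ⟨hy1, hy2⟩ := hgood y hy
      rw [(hpcoords x hx).1, (hpcoords y hy).1, hT]
      exact tgtval2_mono K S hKS hx1 (rp_lt_half o x) hy1 (rp_lt_half o y) hxy
  have key_eq : ∀ x y : S2, rp o x = rp o y → rp o (p x) = rp o (p y) := by
    intro x y hxy
    by_cases hx : InACl A x <;> by_cases hy : InACl A y
    · rw [hpid x hx, hpid y hy]; exact hxy
    · exfalso; apply hy
      obtain ⟨a, ha, hr⟩ := (InACl_iff o).1 hx
      exact (InACl_iff o).2 ⟨a, ha, by rw [hr, hxy]⟩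
    · exfalso; apply hx
      obtain ⟨a, ha, hr⟩ := (InACl_iff o).1 hy
      exact (InACl_iff o).2 ⟨a, ha, by rw [hr, ← hxy]⟩
    · rw [(hpcoords x hx).1, (hpcoords y hy).1, hxy]
  have hsd_all : ∀ x : S2, (sd o (p x) ↔ sd o x) := by
    intro x
    by_cases hx : InACl A x
    · rw [hpid x hx]
    · exact (hpcoords x hx).2
  have hpo : p o = o := hpid o (inacl_mem ho)
  obtain ⟨g, hg, hgeq⟩ := ext_lemma (A ∪ C) o (Finset.mem_union_left C ho) p hpo
    (fun x _ => hsd_all x) (fun x _ y _ => key_lt x y) (fun x _ y _ => key_eq x y)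
  refine ⟨g, hg, ?_, ?_⟩
  · intro a ha
    rw [hgeq a (Finset.mem_union_left C ha), hpid a (inacl_mem ha)]
  · intro b hbB hnb c hc hnc hst
    obtain ⟨c₀', hc₀', hu⟩ := hc
    obtain ⟨c₀, hc₀C, rfl⟩ := mem_pimg.1 hc₀'
    have hgc : g c₀ = p c₀ := hgeq c₀ (Finset.mem_union_right A hc₀C)
    have hrcc : rp o c = rp o (g c₀) := by
      rcases (unrel_iff o).1 hu with h | h
      · rw [h]
      · rw [h, rp_tau]
    by_cases hcI : InACl A c₀
    · exfalso
      apply hnc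
      rw [hgc, hpid c₀ hcI] at hrcc
      obtain ⟨a, ha, hr⟩ := (InACl_iff o).1 hcI
      exact (InACl_iff o).2 ⟨a, ha, by rw [hr, ← hrcc]⟩
    · obtain ⟨hc1, hc2⟩ := hgood c₀ hcI
      obtain ⟨ec1, ec2⟩ := hpcoords c₀ hcI
      rw [hgc, ec1] at hrcc
      obtain ⟨t1, t2⟩ := tgtval2_spec K S hc1 (rp_lt_half o c₀)
      obtain ⟨hu1, hu2, hu3, hu4⟩ := cellUp_spec K (rp_lt_half o c₀)
      rw [sametp_iff (A := A) (o := o) ho hnb hnc] at hst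
      obtain ⟨hside, hcut⟩ := hst
      -- rp o b < cellUp K (rp o c₀)
      have hbu : rp o b < cellUp K (rp o c₀) := by
        rcases Finset.mem_insert.1 hu4 with h | h
        · rw [h]; exact rp_lt_half o b
        · obtain ⟨au, hau, haur⟩ := Finset.mem_image.1 (by rw [hK] at h; exact h)
          have h5 : rp o c < rp o au := by rw [hrcc, haur, hT]; linarith
          have h6 := (hcut au hau).2 h5
          rw [haur] at h6
          exact h6
      have hbS : rp o b ∈ S := by
        rw [hS]
        exact Finset.mem_union_left _ (Finset.mem_image_of_mem _ hbB)
      have hu0 : 0 < cellUp K (rp o c₀) := by linarith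
      have hbM := (baseMax_spec S hu0).2.2 _ hbS hbu
      rw [s2rel_iff o]
      refine Or.inl ⟨hside, ?_⟩
      rw [hrcc, hT]
      linarith

-- small auxiliary lemmas for stationarity
lemma sd_iff_or (o z : S2) : sd o z ↔ (z = o ∨ s2rel o z) := by
  rw [rel_base_iff']
  constructor
  · intro h
    rcases eq_or_lt_of_le (rp_nonneg o z) with h0 | h0
    · left
      exact sd_rp_inj (o := o) (by rw [← h0, rp_self]) (iff_of_true h (sd_self o))
    · exact Or.inr ⟨h, h0⟩
  · rintro (h | ⟨h, _⟩)
    · rw [h]; exact sd_self _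
    · exact h

lemma rp_eq_iff {o u v : S2} : rp o u = rp o v ↔ (v = u ∨ v = tau u) := by
  constructor
  · intro h
    by_cases hs : sd o u ↔ sd o v
    · exact Or.inl (sd_rp_inj h hs).symm
    · exact Or.inr (tau_eq_of h hs)
  · rintro (rfl | rfl)
    · rfl
    · rw [rp_tau]

lemma sametp_refl {A : Finset S2} (x : S2) : SameTp A x x := fun _ _ => Iff.rfl

lemma rel_coord2 {o x y : S2} (h : rp o x < rp o y) :
    (s2rel x y ↔ (sd o x ↔ sd o y)) ∧ (s2rel y x ↔ ¬(sd o x ↔ sd o y)) := by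
  constructor
  · rw [s2rel_iff o]
    constructor
    · rintro (⟨hi, _⟩ | ⟨_, h2⟩)
      · exact hi
      · exact absurd h (by linarith)
    · intro hi; exact Or.inl ⟨hi, h⟩
  · rw [s2rel_iff o]
    constructor
    · rintro (⟨_, h2⟩ | ⟨hn, _⟩)
      · exact absurd h (by linarith)
      · exact fun hh => hn hh.symm
    · intro hn; exact Or.inr ⟨fun hh => hn hh.symm, h⟩

lemma sametp_tau_cong {A : Finset S2} {o u v : S2} (ho : o ∈ A)
    (hu : ¬ InACl A u) (hv : ¬ InACl A v) (h : SameTp A u v) :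
    SameTp A (tau u) (tau v) := by
  have hτu : ¬ InACl A (tau u) := fun hh => hu (InACl_tau.1 hh)
  have hτv : ¬ InACl A (tau v) := fun hh => hv (InACl_tau.1 hh)
  rw [sametp_iff ho hu hv] at h
  rw [sametp_iff ho hτu hτv]
  obtain ⟨h1, h2⟩ := h
  constructor
  · rw [sd_tau, sd_tau]; exact not_congr h1
  · intro a ha
    rw [rp_tau, rp_tau]
    exact h2 a ha

lemma sametp_tau_comm {A : Finset S2} {o x y : S2} (ho : o ∈ A)
    (hx : ¬ InACl A x) (hy : ¬ InACl A y) :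
    SameTp A x (tau y) ↔ SameTp A y (tau x) := by
  have hτx : ¬ InACl A (tau x) := fun hh => hx (InACl_tau.1 hh)
  have hτy : ¬ InACl A (tau y) := fun hh => hy (InACl_tau.1 hh)
  rw [sametp_iff ho hx hτy, sametp_iff ho hy hτx]
  rw [sd_tau, sd_tau, rp_tau, rp_tau]
  constructor
  · rintro ⟨h1, h2⟩
    refine ⟨by tauto, fun a ha => (h2 a ha).symm⟩
  · rintro ⟨h1, h2⟩
    refine ⟨by tauto, fun a ha => (h2 a ha).symm⟩

lemma rel_const {A : Finset S2} {o x x' y : S2} (ho : o ∈ A)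
    (hx : ¬ InACl A x) (hx' : ¬ InACl A x') (hy : ¬ InACl A y)
    (hSame : SameTp A x x') (hn1 : ¬ SameTp A x y) (hn2 : ¬ SameTp A x (tau y)) :
    (s2rel x y ↔ s2rel x' y) ∧ (s2rel y x ↔ s2rel y x') := by
  have hτy : ¬ InACl A (tau y) := fun h => hy (InACl_tau.1 h)
  rw [sametp_iff ho hx hx'] at hSame
  obtain ⟨hside, hcut⟩ := hSame
  have hsep : ∃ a ∈ A, ¬ (rp o x < rp o a ↔ rp o y < rp o a) := by
    by_contra h
    push_neg at h
    by_cases hs : sd o x ↔ sd o y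
    · exact hn1 ((sametp_iff ho hx hy).2 ⟨hs, h⟩)
    · apply hn2
      rw [sametp_iff ho hx hτy]
      constructor
      · rw [sd_tau]; tauto
      · intro a ha; rw [rp_tau]; exact h a ha
  obtain ⟨a, ha, hne⟩ := hsep
  have hya : rp o y ≠ rp o a := fun h => hy ((InACl_iff o).2 ⟨a, ha, h.symm⟩)
  have hxa : rp o x ≠ rp o a := fun h => hx ((InACl_iff o).2 ⟨a, ha, h.symm⟩)
  have hx'a : rp o x' ≠ rp o a := fun h => hx' ((InACl_iff o).2 ⟨a, ha, h.symm⟩)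
  rcases not_iff_cases hne with ⟨c1, c2⟩ | ⟨c1, c2⟩
  · -- rp x < rp a ≤ rp y, so rp x < rp y and rp x' < rp y
    have h1 : rp o x < rp o y := by
      push_neg at c2
      have := c2.lt_of_ne (Ne.symm hya)
      linarith
    have h1' : rp o x' < rp o y := by
      have := (hcut a ha).1 c1
      push_neg at c2
      have h2 := c2.lt_of_ne (Ne.symm hya)
      linarith
    obtain ⟨e1, e2⟩ := rel_coord2 (o := o) h1
    obtain ⟨e1', e2'⟩ := rel_coord2 (o := o) h1'
    constructor
    · rw [e1, e1']
      constructor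
      · intro h; exact hside.symm.trans h
      · intro h; exact hside.trans h
    · rw [e2, e2']
      constructor
      · intro h hh; exact h (hside.trans hh)
      · intro h hh; exact h (hside.symm.trans hh)
  · -- rp y < rp a ≤ rp x
    have h1 : rp o y < rp o x := by
      push_neg at c1
      have := c1.lt_of_ne (Ne.symm hxa)
      linarith
    have h1' : rp o y < rp o x' := by
      have h3 : ¬ (rp o x' < rp o a) := fun hh => c1 ((hcut a ha).2 hh)
      push_neg at h3
      have := h3.lt_of_ne (Ne.symm hx'a)
      linarith
    obtain ⟨e1, e2⟩ := rel_coord2 (o := o) h1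
    obtain ⟨e1', e2'⟩ := rel_coord2 (o := o) h1'
    constructor
    · rw [e2, e2']
      constructor
      · intro h hh; exact h (hh.trans hside.symm)
      · intro h hh; exact h (hh.trans hside)
    · rw [e1, e1']
      constructor
      · intro h; exact h.trans hside
      · intro h; exact h.trans hside.symm

-- bridge: relation-preserving maps satisfy the coordinate hypotheses of ext_lemma
lemma bridge (E : Finset S2) (o : S2) (ho : o ∈ E) (p : S2 → S2)
    (hpo : p o = o)
    (hinj : ∀ x ∈ E, ∀ y ∈ E, p x = p y → x = y)
    (hpres : ∀ x ∈ E, ∀ y ∈ E, (s2rel (p x) (p y) ↔ s2rel x y)) :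
    ∃ g : Equiv.Perm S2, AutoS2 g ∧ ∀ x ∈ E, g x = p x := by
  have hsd : ∀ x ∈ E, (sd o (p x) ↔ sd o x) := by
    intro x hx
    by_cases hxo : x = o
    · subst hxo; rw [hpo]
    · have hpxo : p x ≠ o := by
        intro h
        exact hxo (hinj x hx o ho (by rw [h, hpo]))
      rw [sd_iff_or o (p x), sd_iff_or o x]
      have h2 : s2rel o (p x) ↔ s2rel o x := by
        conv_lhs => rw [← hpo]
        exact hpres o ho x hx
      constructor
      · rintro (h | h)
        · exact absurd h hpxo
        · exact Or.inr (h2.1 h)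
      · rintro (h | h)
        · exact absurd h hxo
        · exact Or.inr (h2.2 h)
  have heq : ∀ x ∈ E, ∀ y ∈ E, rp o x = rp o y → rp o (p x) = rp o (p y) := by
    intro x hx y hy h
    rcases rp_eq_iff.1 h with rfl | rfl
    · rfl
    · have hxy : x ≠ tau x := (tau_ne x).symm
      have hu : Unrel x (tau x) := (unrel_iff x).2 (Or.inr rfl)
      have hu' : Unrel (p x) (p (tau x)) :=
        ⟨fun hh => hu.1 ((hpres x hx (tau x) hy).1 hh),
         fun hh => hu.2 ((hpres (tau x) hy x hx).1 hh)⟩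
      have hne : p (tau x) ≠ p x := fun hh => hxy (hinj x hx (tau x) hy hh.symm)
      rcases (unrel_iff o).1 hu' with h | h
      · exact absurd h hne
      · rw [h, rp_tau]
  have hlt : ∀ x ∈ E, ∀ y ∈ E, rp o x < rp o y → rp o (p x) < rp o (p y) := by
    intro x hx y hy h
    by_cases hs : sd o x ↔ sd o y
    · have hrel : s2rel x y := (s2rel_iff o x y).2 (Or.inl ⟨hs, h⟩)
      have hrel' : s2rel (p x) (p y) := (hpres x hx y hy).2 hrel
      rcases (s2rel_iff o _ _).1 hrel' with ⟨_, h2⟩ | ⟨hn, _⟩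
      · exact h2
      · exact absurd (((hsd x hx).trans hs).trans (hsd y hy).symm) hn
    · have hrel : s2rel y x := (s2rel_iff o y x).2 (Or.inr ⟨fun hh => hs hh.symm, h⟩)
      have hrel' : s2rel (p y) (p x) := (hpres y hy x hx).2 hrel
      rcases (s2rel_iff o _ _).1 hrel' with ⟨hi, _⟩ | ⟨_, h2⟩
      · exact absurd (((hsd y hy).symm.trans hi).trans (hsd x hx)) (fun hh => hs hh.symm)
      · exact h2
  exact ext_lemma E o ho p hpo hsd hlt heq

-- more automorphism helpers
lemma auto_tau {g : Equiv.Perm S2} (hg : AutoS2 g) (x : S2) : g (tau x) = tau (g x) := by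
  have h1 : Unrel x (tau x) := (unrel_iff x).2 (Or.inr rfl)
  have h2 : Unrel (g x) (g (tau x)) := (auto_unrel hg x (tau x)).2 h1
  rcases (unrel_iff (g x)).1 h2 with h | h
  · exfalso
    have : tau x = x := g.injective h
    exact tau_ne x this
  · exact h

lemma auto_fix_inacl {g : Equiv.Perm S2} (hg : AutoS2 g) {A : Finset S2}
    (hfix : ∀ a ∈ A, g a = a) {x : S2} (hx : InACl A x) : g x = x := by
  obtain ⟨a, ha, hu⟩ := hx
  rcases (unrel_iff x).1 hu with h | h
  · rw [← h]; exact hfix a ha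
  · have hxa : x = tau a := by rw [h, tau_tau]
    rw [hxa, auto_tau hg, hfix a ha]

lemma sametp_g {g : Equiv.Perm S2} (hg : AutoS2 g) {A : Finset S2}
    (hfix : ∀ a ∈ A, g a = a) (x : S2) : SameTp A x (g x) := by
  intro a ha
  have h := hg x a
  rw [hfix a ha] at h
  exact h.symm

lemma not_inacl_g {g : Equiv.Perm S2} (hg : AutoS2 g) {A : Finset S2}
    (hfix : ∀ a ∈ A, g a = a) {x : S2} (hx : ¬ InACl A x) : ¬ InACl A (g x) := by
  intro h
  have h2 := auto_fix_inacl hg hfix h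
  exact hx (g.injective h2 ▸ h)

-- stability of relations to C when replacing b by g b (left version)
lemma rel_stable {A B B' C : Finset S2} {g : Equiv.Perm S2}
    (hg : AutoS2 g) (hfix : ∀ a ∈ A, g a = a) (himg : pimg g B = B')
    (hI : IndR A B C) (hI' : IndR A B' C) (hA : A.Nonempty)
    {b : S2} (hb : b ∈ B) {y : S2} (hy : ∃ c₀ ∈ C, Unrel y c₀) :
    s2rel (g b) y ↔ s2rel b y := by
  obtain ⟨o, ho⟩ := hA
  by_cases hbI : InACl A b
  · rw [auto_fix_inacl hg hfix hbI]
  have hgbI : ¬ InACl A (g b) := not_inacl_g hg hfix hbI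
  have hsame : SameTp A b (g b) := sametp_g hg hfix b
  have hgbB' : g b ∈ B' := himg ▸ mem_pimg.2 ⟨b, hb, rfl⟩
  by_cases hyI : InACl A y
  · obtain ⟨a, ha, hu⟩ := hyI
    rcases (unrel_iff y).1 hu with h | h
    · rw [← h]
      exact ((hsame a ha).symm.trans (Iff.rfl)).symm.symm  -- s2rel (g b) a ↔ s2rel b a
    · have hya : y = tau a := by rw [h, tau_tau]
      rw [hya, rel_tau_right, rel_tau_right]
      have h2 := hg a b
      rw [hfix a ha] at h2
      exact h2
  · have hτy : ¬ InACl A (tau y) := fun h => hyI (InACl_tau.1 h)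
    by_cases h1 : SameTp A b y
    · have h1' : SameTp A (g b) y := sametp_trans (sametp_symm hsame) h1
      exact iff_of_true (hI' (g b) hgbB' hgbI y hy hyI h1')
        (hI b hb hbI y hy hyI h1)
    · by_cases h2 : SameTp A b (tau y)
      · obtain ⟨c₀, hc₀, hu⟩ := hy
        have hτyw : ∃ c₀ ∈ C, Unrel (tau y) c₀ := ⟨c₀, hc₀, (unrel_tau_left y c₀).2 hu⟩
        have r1 : s2rel b (tau y) := hI b hb hbI (tau y) hτyw hτy h2
        have r2 : s2rel (g b) (tau y) :=
          hI' (g b) hgbB' hgbI (tau y) hτyw hτy (sametp_trans (sametp_symm hsame) h2)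
        rw [rel_tau_right] at r1 r2
        exact iff_of_false (rel_asymm r2) (rel_asymm r1)
      · exact ((rel_const ho hbI hgbI hyI hsame h1 h2).1).symm

-- stability (right version): replacing c by g c does not change relations to B
lemma rel_stable_right {A B C C' : Finset S2} {g : Equiv.Perm S2}
    (hg : AutoS2 g) (hfix : ∀ a ∈ A, g a = a) (himg : pimg g C = C')
    (hI : IndR A B C) (hI' : IndR A B C') (hA : A.Nonempty)
    {c : S2} (hc : ∃ c₀ ∈ C, Unrel c c₀) {y : S2} (hy : y ∈ B) :
    s2rel y (g c) ↔ s2rel y c := by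
  obtain ⟨o, ho⟩ := hA
  obtain ⟨c₀, hc₀, hu⟩ := hc
  by_cases hcI : InACl A c
  · rw [auto_fix_inacl hg hfix hcI]
  have hgcI : ¬ InACl A (g c) := not_inacl_g hg hfix hcI
  have hsame : SameTp A c (g c) := sametp_g hg hfix c
  have hgcW : ∃ d ∈ C', Unrel (g c) d :=
    ⟨g c₀, himg ▸ mem_pimg.2 ⟨c₀, hc₀, rfl⟩, (auto_unrel hg c c₀).2 hu⟩
  by_cases hyI : InACl A y
  · have h2 := auto_fix_inacl hg hfix hyI
    conv_lhs => rw [← h2]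
    exact hg y c
  · have hτc : ¬ InACl A (tau c) := fun h => hcI (InACl_tau.1 h)
    have hτgc : ¬ InACl A (tau (g c)) := fun h => hgcI (InACl_tau.1 h)
    by_cases h1 : SameTp A y c
    · have h1' : SameTp A y (g c) := sametp_trans h1 hsame
      exact iff_of_true (hI' y hy hyI (g c) hgcW hgcI h1')
        (hI y hy hyI c ⟨c₀, hc₀, hu⟩ hcI h1)
    · by_cases h2 : SameTp A y (tau c)
      · have hτcW : ∃ d ∈ C, Unrel (tau c) d := ⟨c₀, hc₀, (unrel_tau_left c c₀).2 hu⟩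
        have hτgcW : ∃ d ∈ C', Unrel (tau (g c)) d :=
          ⟨g c₀, himg ▸ mem_pimg.2 ⟨c₀, hc₀, rfl⟩,
            (unrel_tau_left (g c) (g c₀)).2 ((auto_unrel hg c c₀).2 hu)⟩
        have h2' : SameTp A y (tau (g c)) :=
          sametp_trans h2 (sametp_tau_cong ho hcI hgcI hsame)
        have r1 : s2rel y (tau c) := hI y hy hyI (tau c) hτcW hτc h2
        have r2 : s2rel y (tau (g c)) := hI' y hy hyI (tau (g c)) hτgcW hτgc h2'
        rw [rel_tau_right] at r1 r2
        exact iff_of_false (fun hh => rel_asymm hh r2) (fun hh => rel_asymm hh r1)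
      · have hn1 : ¬ SameTp A c y := fun h => h1 (sametp_symm h)
        have hn2 : ¬ SameTp A c (tau y) := by
          intro h
          exact h2 ((sametp_tau_comm ho hcI hyI).1 h)
        exact ((rel_const ho hcI hgcI hyI hsame hn1 hn2).2).symm

lemma sta_left (A B B' C : Finset S2) (hA : A.Nonempty)
    (hI : IndR A B C) (hI' : IndR A B' C) (g : Equiv.Perm S2)
    (hg : AutoS2 g) (hfix : ∀ a ∈ A, g a = a) (himg : pimg g B = B') :
    ∃ h : Equiv.Perm S2, AutoS2 h ∧ (∀ x ∈ A ∪ C, h x = x) ∧ ∀ b ∈ B, h b = g b := by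
  classical
  obtain ⟨o, ho⟩ := hA
  set p : S2 → S2 := fun x => if x ∈ B then g x else x with hp
  set E : Finset S2 := A ∪ B ∪ C with hE
  have hoE : o ∈ E := by
    rw [hE]; exact Finset.mem_union_left _ (Finset.mem_union_left _ ho)
  have hBE : B ⊆ E := by
    intro x hx; rw [hE]; exact Finset.mem_union_left _ (Finset.mem_union_right _ hx)
  have hACE : A ∪ C ⊆ E := by
    intro x hx
    rcases Finset.mem_union.1 hx with h | h
    · rw [hE]; exact Finset.mem_union_left _ (Finset.mem_union_left _ h)
    · rw [hE]; exact Finset.mem_union_right _ h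
  have hEmem : ∀ x ∈ E, x ∈ B ∨ x ∈ A ∪ C := by
    intro x hx
    rw [hE] at hx
    rcases Finset.mem_union.1 hx with h | h
    · rcases Finset.mem_union.1 h with h' | h'
      · exact Or.inr (Finset.mem_union_left _ h')
      · exact Or.inl h'
    · exact Or.inr (Finset.mem_union_right _ h)
  have hBfix : ∀ x, x ∈ B → x ∈ A ∪ C → g x = x := by
    intro x hxB hxAC
    rcases Finset.mem_union.1 hxAC with hxA | hxC
    · exact hfix x hxA
    · by_cases hxI : InACl A x
      · exact auto_fix_inacl hg hfix hxI
      · exact absurd (hI x hxB hxI x ⟨x, hxC, unrel_self x⟩ hxI (sametp_refl x))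
          (rel_irrefl x)
  have hpid : ∀ x, x ∈ A ∪ C → p x = x := by
    intro x hx
    simp only [hp]
    split_ifs with hB
    · exact hBfix x hB hx
    · rfl
  have hpB : ∀ x ∈ B, p x = g x := by
    intro x hx; simp only [hp]; rw [if_pos hx]
  have hpo : p o = o := hpid o (Finset.mem_union_left _ ho)
  have keyinj : ∀ x ∈ B, ∀ y, y ∈ A ∪ C → g x = y → x = y := by
    intro x hxB y hyAC hgxy
    by_cases hyI : InACl A y
    · exact g.injective (by rw [hgxy, auto_fix_inacl hg hfix hyI])
    · have hyC : y ∈ C := by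
        rcases Finset.mem_union.1 hyAC with h | h
        · exact absurd (inacl_mem h) hyI
        · exact h
      have hyB' : y ∈ B' := himg ▸ mem_pimg.2 ⟨x, hxB, hgxy⟩
      exact absurd (hI' y hyB' hyI y ⟨y, hyC, unrel_self y⟩ hyI (sametp_refl y))
        (rel_irrefl y)
  have hinj : ∀ x ∈ E, ∀ y ∈ E, p x = p y → x = y := by
    intro x hx y hy hpxy
    rcases hEmem x hx with hxB | hxAC <;> rcases hEmem y hy with hyB | hyAC
    · rw [hpB x hxB, hpB y hyB] at hpxy; exact g.injective hpxy
    · rw [hpB x hxB, hpid y hyAC] at hpxy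
      exact keyinj x hxB y hyAC hpxy
    · rw [hpid x hxAC, hpB y hyB] at hpxy
      exact (keyinj y hyB x hxAC hpxy.symm).symm
    · rw [hpid x hxAC, hpid y hyAC] at hpxy; exact hpxy
  have hrelB : ∀ x ∈ B, ∀ y, y ∈ A ∪ C →
      (s2rel (g x) y ↔ s2rel x y) ∧ (s2rel y (g x) ↔ s2rel y x) := by
    intro x hxB y hyAC
    rcases Finset.mem_union.1 hyAC with hyA | hyC
    · constructor
      · conv_lhs => rw [← hfix y hyA]
        exact hg x y
      · conv_lhs => rw [← hfix y hyA]
        exact hg y x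
    · constructor
      · exact rel_stable hg hfix himg hI hI' ⟨o, ho⟩ hxB ⟨y, hyC, unrel_self y⟩
      · rw [← rel_tau_right (g x) y, ← rel_tau_right x y]
        exact rel_stable hg hfix himg hI hI' ⟨o, ho⟩ hxB
          ⟨y, hyC, (unrel_tau_left y y).2 (unrel_self y)⟩
  have hpres : ∀ x ∈ E, ∀ y ∈ E, (s2rel (p x) (p y) ↔ s2rel x y) := by
    intro x hx y hy
    rcases hEmem x hx with hxB | hxAC <;> rcases hEmem y hy with hyB | hyAC
    · rw [hpB x hxB, hpB y hyB]; exact hg x y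
    · rw [hpB x hxB, hpid y hyAC]; exact (hrelB x hxB y hyAC).1
    · rw [hpid x hxAC, hpB y hyB]; exact (hrelB y hyB x hxAC).2
    · rw [hpid x hxAC, hpid y hyAC]
  obtain ⟨h, hauto, hval⟩ := bridge E o hoE p hpo hinj hpres
  refine ⟨h, hauto, ?_, ?_⟩
  · intro x hx
    rw [hval x (hACE hx), hpid x hx]
  · intro b hb
    rw [hval b (hBE hb), hpB b hb]

lemma sta_right (A B C C' : Finset S2) (hA : A.Nonempty)
    (hI : IndR A B C) (hI' : IndR A B C') (g : Equiv.Perm S2)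
    (hg : AutoS2 g) (hfix : ∀ a ∈ A, g a = a) (himg : pimg g C = C') :
    ∃ h : Equiv.Perm S2, AutoS2 h ∧ (∀ x ∈ A ∪ B, h x = x) ∧ ∀ c ∈ C, h c = g c := by
  classical
  obtain ⟨o, ho⟩ := hA
  set p : S2 → S2 := fun x => if x ∈ C then g x else x with hp
  set E : Finset S2 := A ∪ B ∪ C with hE
  have hoE : o ∈ E := by
    rw [hE]; exact Finset.mem_union_left _ (Finset.mem_union_left _ ho)
  have hCE : C ⊆ E := by
    intro x hx; rw [hE]; exact Finset.mem_union_right _ hx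
  have hABE : A ∪ B ⊆ E := by
    intro x hx; rw [hE]; exact Finset.mem_union_left _ hx
  have hEmem : ∀ x ∈ E, x ∈ C ∨ x ∈ A ∪ B := by
    intro x hx
    rw [hE] at hx
    rcases Finset.mem_union.1 hx with h | h
    · exact Or.inr h
    · exact Or.inl h
  have hCfix : ∀ x, x ∈ C → x ∈ A ∪ B → g x = x := by
    intro x hxC hxAB
    rcases Finset.mem_union.1 hxAB with hxA | hxB
    · exact hfix x hxA
    · by_cases hxI : InACl A x
      · exact auto_fix_inacl hg hfix hxI
      · exact absurd (hI x hxB hxI x ⟨x, hxC, unrel_self x⟩ hxI (sametp_refl x))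
          (rel_irrefl x)
  have hpid : ∀ x, x ∈ A ∪ B → p x = x := by
    intro x hx
    simp only [hp]
    split_ifs with hC
    · exact hCfix x hC hx
    · rfl
  have hpC : ∀ x ∈ C, p x = g x := by
    intro x hx; simp only [hp]; rw [if_pos hx]
  have hpo : p o = o := hpid o (Finset.mem_union_left _ ho)
  have keyinj : ∀ x ∈ C, ∀ y, y ∈ A ∪ B → g x = y → x = y := by
    intro x hxC y hyAB hgxy
    by_cases hyI : InACl A y
    · exact g.injective (by rw [hgxy, auto_fix_inacl hg hfix hyI])
    · have hyB : y ∈ B := by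
        rcases Finset.mem_union.1 hyAB with h | h
        · exact absurd (inacl_mem h) hyI
        · exact h
      have hyC' : y ∈ C' := himg ▸ mem_pimg.2 ⟨x, hxC, hgxy⟩
      exact absurd (hI' y hyB hyI y ⟨y, hyC', unrel_self y⟩ hyI (sametp_refl y))
        (rel_irrefl y)
  have hinj : ∀ x ∈ E, ∀ y ∈ E, p x = p y → x = y := by
    intro x hx y hy hpxy
    rcases hEmem x hx with hxC | hxAB <;> rcases hEmem y hy with hyC | hyAB
    · rw [hpC x hxC, hpC y hyC] at hpxy; exact g.injective hpxy
    · rw [hpC x hxC, hpid y hyAB] at hpxy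
      exact keyinj x hxC y hyAB hpxy
    · rw [hpid x hxAB, hpC y hyC] at hpxy
      exact (keyinj y hyC x hxAB hpxy.symm).symm
    · rw [hpid x hxAB, hpid y hyAB] at hpxy; exact hpxy
  have hrelC : ∀ x ∈ C, ∀ y, y ∈ A ∪ B →
      (s2rel y (g x) ↔ s2rel y x) ∧ (s2rel (g x) y ↔ s2rel x y) := by
    intro x hxC y hyAB
    rcases Finset.mem_union.1 hyAB with hyA | hyB
    · constructor
      · conv_lhs => rw [← hfix y hyA]
        exact hg y x
      · conv_lhs => rw [← hfix y hyA]
        exact hg x y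
    · constructor
      · exact rel_stable_right hg hfix himg hI hI' ⟨o, ho⟩ ⟨x, hxC, unrel_self x⟩ hyB
      · rw [← rel_tau_right y (g x), ← rel_tau_right y x, ← auto_tau hg x]
        exact rel_stable_right hg hfix himg hI hI' ⟨o, ho⟩
          ⟨x, hxC, (unrel_tau_left x x).2 (unrel_self x)⟩ hyB
  have hpres : ∀ x ∈ E, ∀ y ∈ E, (s2rel (p x) (p y) ↔ s2rel x y) := by
    intro x hx y hy
    rcases hEmem x hx with hxC | hxAB <;> rcases hEmem y hy with hyC | hyAB
    · rw [hpC x hxC, hpC y hyC]; exact hg x y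
    · rw [hpC x hxC, hpid y hyAB]; exact (hrelC x hxC y hyAB).2
    · rw [hpid x hxAB, hpC y hyC]; exact (hrelC y hyC x hxAB).1
    · rw [hpid x hxAB, hpid y hyAB]
  obtain ⟨h, hauto, hval⟩ := bridge E o hoE p hpo hinj hpres
  refine ⟨h, hauto, ?_, ?_⟩
  · intro x hx
    rw [hval x (hABE hx), hpid x hx]
  · intro c hc
    rw [hval c (hCE hc), hpC c hc]

/-- the dense local order `S(2)` has a local SWIR. -/
theorem S2_has_localSWIR :
    ∃ Ind : Finset S2 → Finset S2 → Finset S2 → Prop, IsLocalSWIR AutoS2 Ind := by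
  refine ⟨IndR, ?_, ?_, ?_, ?_, ?_, ?_, ?_⟩
  · -- inv
    intro A B C _ _ _ g hg h
    exact IndR_inv g hg h
  · -- exLeft
    intro A B C hA _ _
    obtain ⟨g, hg, hfix, hind⟩ := ex_left A B C hA
    exact ⟨pimg g B, ⟨g, hg, hfix, rfl⟩, hind⟩
  · -- exRight
    intro A B C hA _ _
    obtain ⟨g, hg, hfix, hind⟩ := ex_right A B C hA
    exact ⟨pimg g C, ⟨g, hg, hfix, rfl⟩, hind⟩
  · -- staLeft
    intro A B B' C hA _ _ _ hI hI' g hg hfix himg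
    obtain ⟨h, hauto, hfixAC, hval⟩ := sta_left A B B' C hA hI hI' g hg hfix himg
    exact ⟨h, hauto, hfixAC, hval⟩
  · -- staRight
    intro A B C C' hA _ _ _ hI hI' g hg hfix himg
    obtain ⟨h, hauto, hfixAB, hval⟩ := sta_right A B C C' hA hI hI' g hg hfix himg
    exact ⟨h, hauto, hfixAB, hval⟩
  · -- monLeft
    intro A B C D _ _ _ _ h
    exact ⟨IndR_B_mono Finset.subset_union_left h,
      IndR_B_mono Finset.subset_union_right (IndR_base_mono Finset.subset_union_left h)⟩
  · -- monRight
    intro A B C D _ _ _ _ h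
    exact ⟨IndR_C_mono Finset.subset_union_left h,
      IndR_C_mono Finset.subset_union_right (IndR_base_mono Finset.subset_union_left h)⟩

end Stmt16
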